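/- arXiv:1402.5136 — 4 statements merged into one kernel-verified Lean document; each statement's English description precedes it below -/
import Mathlib

section
/- Let S be a monoid that satisfies the identity σμ: x t1 x y t2 y ≈ x t1 y x t2 y, and suppose the word xy (x, y distinct variables) is not an isoterm for S. Then either there exists a finite set A of almost-linear identities of S such that every identity of S is a consequence of A, or there exists an integer n > 1 such that S satisfies x ≈ x^n and every identity of S is regular. -/
/-- Words over a countably infinite alphabet of variables (identified with ℕ). -/
abbrev Wd := List ℕ

/-- Evaluation of a word in a monoid under an assignment of the variables. -/
def evalWord {M : Type*} [Monoid M] (φ : ℕ → M) (u : Wd) : M := (u.map φ).prod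

/-- A monoid `M` satisfies the identity `e = (u, v)`. -/
def Sat (M : Type*) [Monoid M] (e : Wd × Wd) : Prop :=
  ∀ φ : ℕ → M, evalWord φ e.1 = evalWord φ e.2

/-- The identity `e` is a consequence of the set of identities `Γ`:
every monoid satisfying all identities of `Γ` satisfies `e`. -/
def Consequence (Γ : Set (Wd × Wd)) (e : Wd × Wd) : Prop :=
  ∀ (M : Type) [Monoid M], (∀ f ∈ Γ, Sat M f) → Sat M e

/-- The content of a word: the set of variables occurring in it. -/
def conW (u : Wd) : Set ℕ := {x | x ∈ u}

/-- The set of linear (exactly once occurring) variables of a word. -/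
def linW (u : Wd) : Set ℕ := {x | u.count x = 1}

/-- The set of non-linear (more than once occurring) variables of a word. -/
def nonW (u : Wd) : Set ℕ := {x | 2 ≤ u.count x}

/-- `restrict u X` is the word obtained from `u` by deleting all occurrences of
all variables not in `X`. -/
noncomputable def restrict (u : Wd) (X : Set ℕ) : Wd :=
  u.filter (fun a => @decide (a ∈ X) (Classical.propDecidable _))

/-- The closure of a set of identities under deleting variables. -/
def delta (Γ : Set (Wd × Wd)) : Set (Wd × Wd) :=
  {e | ∃ f ∈ Γ, ∃ X : Set ℕ, e = (restrict f.1 X, restrict f.2 X)}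

/-- A word is almost-linear if it has at most one non-linear variable. -/
def AlmostLinearW (u : Wd) : Prop := ∀ x y, 2 ≤ u.count x → 2 ≤ u.count y → x = y

/-- An identity is almost-linear if both of its sides are almost-linear words. -/
def AlmostLinearId (e : Wd × Wd) : Prop := AlmostLinearW e.1 ∧ AlmostLinearW e.2

/-- An identity is regular if both sides have the same content. -/
def RegularId (e : Wd × Wd) : Prop := conW e.1 = conW e.2

/-- A word `u` is an isoterm for a monoid `M` if the only word `v` with
`M ⊨ u ≈ v` is `u` itself. -/
def Isoterm (M : Type*) [Monoid M] (u : Wd) : Prop := ∀ v : Wd, Sat M (u, v) → v = u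

/-- An identity `u ≈ v` is block-balanced if `u(x, lin u) = v(x, lin u)`
for every variable `x`. -/
def BlockBalanced (e : Wd × Wd) : Prop :=
  ∀ x : ℕ, restrict e.1 ({x} ∪ linW e.1) = restrict e.2 ({x} ∪ linW e.1)

/-- A monoid is finitely based: some finite set of its identities implies all of them. -/
def FinitelyBased (S : Type*) [Monoid S] : Prop :=
  ∃ Γ : Set (Wd × Wd), Γ.Finite ∧ (∀ e ∈ Γ, Sat S e) ∧
    ∀ e : Wd × Wd, Sat S e → Consequence Γ e

/-- Index of the first occurrence of a variable in a word. -/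
def firstIdx (u : Wd) (x : ℕ) : ℕ := u.idxOf x

/-- Index of the last occurrence of a variable in a word. -/
def lastIdx (u : Wd) (x : ℕ) : ℕ := u.length - 1 - u.reverse.idxOf x

/-- σ1 : x y t1 x t2 y ≈ y x t1 x t2 y, with x=0, y=1, t1=2, t2=3. -/
def sigma1 : Wd × Wd := ([0,1,2,0,3,1], [1,0,2,0,3,1])

/-- σμ : x t1 x y t2 y ≈ x t1 y x t2 y, with x=0, y=1, t1=2, t2=3. -/
def sigmaMu : Wd × Wd := ([0,2,0,1,3,1], [0,2,1,0,3,1])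

/-- σ2 : x t1 y t2 x y ≈ x t1 y t2 y x, with x=0, y=1, t1=2, t2=3. -/
def sigma2 : Wd × Wd := ([0,2,1,3,0,1], [0,2,1,3,1,0])

section Aux
variable {M : Type*} [Monoid M]

lemma evalWord_nil (φ : ℕ → M) : evalWord φ [] = 1 := rfl

lemma evalWord_cons (φ : ℕ → M) (a : ℕ) (u : Wd) :
    evalWord φ (a :: u) = φ a * evalWord φ u := by simp [evalWord]

lemma evalWord_replicate (φ : ℕ → M) (n x : ℕ) :
    evalWord φ (List.replicate n x) = φ x ^ n := by
  induction n with
  | zero => simp [evalWord]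
  | succ n ih => rw [List.replicate_succ, evalWord_cons, ih, pow_succ']

lemma evalWord_indicator (g : M) (x : ℕ) (u : Wd) :
    evalWord (fun z => if z = x then g else 1) u = g ^ u.count x := by
  induction u with
  | nil => simp [evalWord]
  | cons a u ih =>
    rw [evalWord_cons, ih, List.count_cons]
    by_cases h : a = x
    · subst h; simp [pow_succ']
    · simp [h]

/-- `PP S a b` : the monoid `S` satisfies `x^a ≈ x^b`. -/
def PP (S : Type*) [Monoid S] (a b : ℕ) : Prop := ∀ g : S, g ^ a = g ^ b

lemma Sat.count_pow {S : Type*} [Monoid S] {u v : Wd} (h : Sat S (u, v)) (x : ℕ) :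
    PP S (u.count x) (v.count x) := by
  intro g
  have := h (fun z => if z = x then g else 1)
  simpa only [evalWord_indicator] using this

lemma pp_refl (S : Type*) [Monoid S] (a : ℕ) : PP S a a := fun _ => rfl
lemma pp_symm {S : Type*} [Monoid S] {a b : ℕ} (h : PP S a b) : PP S b a := fun g => (h g).symm
lemma pp_trans {S : Type*} [Monoid S] {a b c : ℕ} (h : PP S a b) (h' : PP S b c) : PP S a c :=
  fun g => (h g).trans (h' g)
lemma pp_shift {S : Type*} [Monoid S] {a b : ℕ} (h : PP S a b) (c : ℕ) : PP S (a + c) (b + c) := by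
  intro g; rw [pow_add, pow_add, h g]
lemma pp_of_eq {S : Type*} [Monoid S] {a b a' b' : ℕ} (ha : a = a') (hb : b = b')
    (h : PP S a b) : PP S a' b' := ha ▸ hb ▸ h

lemma pp_chain {S : Type*} [Monoid S] {d base : ℕ} (h : PP S base (base + d)) :
    ∀ k m, base ≤ m → PP S m (m + k * d) := by
  intro k
  induction k with
  | zero => intro m _; exact pp_of_eq rfl (by simp) (pp_refl S m)
  | succ k ih =>
    intro m hm
    refine pp_trans (ih m hm) ?_
    have := pp_shift h (m + k * d - base)
    exact pp_of_eq (by omega) (by rw [Nat.succ_mul]; omega) this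


open Classical in
lemma pp_struct {S : Type*} [Monoid S] (hnt : ∃ a b : ℕ, a ≠ b ∧ PP S a b) :
    ∃ r s : ℕ, 0 < s ∧ PP S r (r + s) ∧
      ∀ a b, PP S a b → a = b ∨ (r ≤ a ∧ r ≤ b ∧ a % s = b % s) := by
  have hEs : ∃ d, 0 < d ∧ ∃ a, PP S a (a + d) := by
    obtain ⟨a, b, hne, h⟩ := hnt
    rcases Nat.lt_or_ge a b with hab | hab
    · exact ⟨b - a, by omega, a, pp_of_eq rfl (by omega) h⟩
    · exact ⟨a - b, by omega, b, pp_of_eq rfl (by omega) (pp_symm h)⟩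
  have hEr : ∃ a, ∃ d, 0 < d ∧ PP S a (a + d) := by
    obtain ⟨d, hd, a, h⟩ := hEs; exact ⟨a, d, hd, h⟩
  set s := Nat.find hEs with hs_def
  obtain ⟨hspos, a₁, ha₁⟩ := Nat.find_spec hEs
  set r := Nat.find hEr with hr_def
  obtain ⟨d₀, hd₀, hrd⟩ := Nat.find_spec hEr
  have hrmin : ∀ a d, 0 < d → PP S a (a + d) → r ≤ a :=
    fun a d hd h => Nat.find_min' hEr ⟨d, hd, h⟩
  have hsmin : ∀ d, 0 < d → (∃ a, PP S a (a + d)) → s ≤ d :=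
    fun d hd h => Nat.find_min' hEs ⟨hd, h⟩
  -- PP S r (r + s)
  have hA : PP S r (r + a₁ * d₀) := pp_chain hrd a₁ r le_rfl
  have hm : a₁ ≤ r + a₁ * d₀ := by
    calc a₁ = a₁ * 1 := by omega
    _ ≤ a₁ * d₀ := Nat.mul_le_mul_left _ hd₀
    _ ≤ r + a₁ * d₀ := by omega
  have hB : PP S (r + a₁ * d₀) (r + a₁ * d₀ + s) :=
    pp_of_eq (by omega) (by omega) (pp_shift ha₁ (r + a₁ * d₀ - a₁))
  have hC : PP S (r + s) (r + a₁ * d₀ + s) :=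
    pp_of_eq (by omega) (by omega) (pp_shift hA s)
  have hrs : PP S r (r + s) := pp_trans (pp_trans hA hB) (pp_symm hC)
  refine ⟨r, s, hspos, hrs, ?_⟩
  have key : ∀ a b, a < b → PP S a b → r ≤ a ∧ a % s = b % s := by
    intro a b hab h
    have hra : r ≤ a := hrmin a (b - a) (by omega) (pp_of_eq rfl (by omega) h)
    refine ⟨hra, ?_⟩
    set t := (b - a) % s with ht_def
    have htlt : t < s := Nat.mod_lt _ hspos
    have hqt : t + (b - a) / s * s = b - a := Nat.mod_add_div' (b - a) s
    have h1 : PP S (a + t) b := by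
      have := pp_chain hrs ((b - a) / s) (a + t) (by omega)
      exact pp_of_eq rfl (by omega) this
    have h2 : PP S a (a + t) := pp_trans h (pp_symm h1)
    rcases Nat.eq_zero_or_pos t with ht0 | htpos
    · have : s ∣ b - a := by omega
      have := (Nat.modEq_iff_dvd' (le_of_lt hab)).mpr this
      exact this
    · exfalso
      have := hsmin t htpos ⟨a, h2⟩
      omega
  intro a b h
  rcases lt_trichotomy a b with hab | hab | hab
  · obtain ⟨h1, h2⟩ := key a b hab h
    exact Or.inr ⟨h1, by omega, h2⟩
  · exact Or.inl hab
  · obtain ⟨h1, h2⟩ := key b a hab (pp_symm h)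
    exact Or.inr ⟨by omega, h1, h2.symm⟩

end Aux

lemma evalWord_eq_prod {M : Type*} [CommMonoid M] (φ : ℕ → M) (u : Wd) (T : Finset ℕ)
    (hT : ∀ x ∈ u, x ∈ T) :
    evalWord φ u = ∏ x ∈ T, φ x ^ u.count x := by
  induction u with
  | nil => simp [evalWord]
  | cons a u ih =>
    rw [evalWord_cons, ih (fun x hx => hT x (List.mem_cons_of_mem a hx))]
    have ha : a ∈ T := hT a List.mem_cons_self
    have : ∀ x ∈ T, φ x ^ (a :: u).count x = (if x = a then φ x else 1) * φ x ^ u.count x := by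
      intro x hx
      rw [List.count_cons]
      by_cases h : a = x
      · subst h; simp [pow_succ']
      · rw [if_neg (show ¬ x = a from fun hh => h hh.symm)]
        simp [h]
    rw [Finset.prod_congr rfl this, Finset.prod_mul_distrib, Finset.prod_ite_eq' T a φ,
      if_pos ha]

lemma sat_of_counts {M : Type*} [Monoid M] (hcomm : ∀ a b : M, a * b = b * a)
    (u v : Wd) (h : ∀ (x : ℕ) (g : M), g ^ u.count x = g ^ v.count x) :
    Sat M (u, v) := by
  letI : CommMonoid M := { ‹Monoid M› with mul_comm := hcomm }
  intro φ
  have h1 := evalWord_eq_prod φ u (u.toFinset ∪ v.toFinset)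
    (fun x hx => Finset.mem_union_left _ (List.mem_toFinset.mpr hx))
  have h2 := evalWord_eq_prod φ v (u.toFinset ∪ v.toFinset)
    (fun x hx => Finset.mem_union_right _ (List.mem_toFinset.mpr hx))
  exact h1.trans ((Finset.prod_congr rfl (fun x _ => h x (φ x))).trans h2.symm)

lemma pow_eq_of_mod {M : Type*} [Monoid M] {r s : ℕ} (hs : 0 < s)
    (hpow : ∀ g : M, g ^ r = g ^ (r + s)) (g : M) :
    ∀ a b : ℕ, (a = b ∨ (r ≤ a ∧ r ≤ b ∧ a % s = b % s)) → g ^ a = g ^ b := by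
  have step : ∀ m, r ≤ m → g ^ m = g ^ (m + s) := by
    intro m hm
    calc g ^ m = g ^ (m - r) * g ^ r := by rw [← pow_add]; congr 1; omega
    _ = g ^ (m - r) * g ^ (r + s) := by rw [hpow]
    _ = g ^ (m + s) := by rw [← pow_add]; congr 1; omega
  have iter : ∀ k m, r ≤ m → g ^ m = g ^ (m + k * s) := by
    intro k
    induction k with
    | zero => intro m _; simp
    | succ k ih =>
      intro m hm
      rw [ih m hm, step (m + k * s) (by omega)]
      congr 1; rw [Nat.succ_mul]; omega
  have half : ∀ a b : ℕ, a ≤ b → r ≤ a → a % s = b % s → g ^ a = g ^ b := by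
    intro a b hab hra hmod
    have hdvd : s ∣ b - a := (Nat.modEq_iff_dvd' hab).mp hmod
    obtain ⟨k, hk⟩ := hdvd
    have : b = a + k * s := by rw [Nat.mul_comm] at hk; omega
    rw [this]; exact iter k a hra
  rintro a b (rfl | ⟨hra, hrb, hmod⟩)
  · rfl
  rcases le_or_gt a b with hab | hab
  · exact half a b hab hra hmod
  · exact (half b a (le_of_lt hab) hrb hmod.symm).symm

lemma comm_of_group {S : Type*} [Monoid S] {p : ℕ} (hp : 0 < p) (h1 : ∀ g : S, g ^ p = 1)
    (hab : ∀ a b : S, a * (a * (b * b)) = a * (b * (a * b))) :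
    ∀ a b : S, a * b = b * a := by
  intro a b
  have hu : ∀ c : S, IsUnit c := by
    intro c
    have hpe : p = (p - 1) + 1 := by omega
    have hl : c * c ^ (p - 1) = 1 := by rw [← pow_succ', ← hpe, h1]
    have hr : c ^ (p - 1) * c = 1 := by rw [← pow_succ, ← hpe, h1]
    exact ⟨⟨c, c ^ (p - 1), hl, hr⟩, rfl⟩
  have step1 : a * (b * b) = b * (a * b) := (hu a).mul_left_cancel (hab a b)
  have step2 : (a * b) * b = (b * a) * b := by
    rw [mul_assoc, mul_assoc]; exact step1
  exact (hu b).mul_right_cancel step2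

section MainAux

lemma sat_comm_iff {S : Type*} [Monoid S] :
    Sat S (([0,1] : Wd), ([1,0] : Wd)) ↔ ∀ a b : S, a * b = b * a := by
  constructor
  · intro h a b
    have := h (fun n => if n = 0 then a else b)
    simpa [evalWord] using this
  · intro h φ
    simpa [evalWord] using h (φ 0) (φ 1)

lemma sat_pow_iff {S : Type*} [Monoid S] (a b : ℕ) :
    Sat S ((List.replicate a 0 : Wd), (List.replicate b 0 : Wd)) ↔ PP S a b := by
  constructor
  · intro h g
    have := h (fun _ => g)
    simpa [evalWord_replicate] using this
  · intro h φ
    show evalWord φ (List.replicate a 0) = evalWord φ (List.replicate b 0)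
    rw [evalWord_replicate, evalWord_replicate]
    exact h (φ 0)

lemma sat_xn_iff {S : Type*} [Monoid S] (n : ℕ) :
    Sat S (([0] : Wd), (List.replicate n 0 : Wd)) ↔ ∀ g : S, g = g ^ n := by
  constructor
  · intro h g
    have := h (fun _ => g)
    simpa [evalWord, evalWord_replicate] using this
  · intro h φ
    show evalWord φ [0] = evalWord φ (List.replicate n 0)
    rw [evalWord_replicate]
    simpa [evalWord] using h (φ 0)

lemma count_le_one_pair (c d x : ℕ) (h : c ≠ d) : List.count x [c, d] ≤ 1 := by
  simp only [List.count_cons, List.count_nil]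
  split_ifs with h1 h2 h2 <;> simp_all <;> omega

lemma al_comm : AlmostLinearId ((([0,1] : Wd)), (([1,0] : Wd))) := by
  constructor <;>
  · intro x y hx hy
    exfalso
    have := count_le_one_pair 0 1 x (by omega)
    have := count_le_one_pair 1 0 x (by omega)
    simp only [AlmostLinearW] at *
    omega

lemma al_rep (k : ℕ) : AlmostLinearW (List.replicate k 0 : Wd) := by
  intro x y hx hy
  rw [List.count_replicate] at hx hy
  by_cases h1 : (0 : ℕ) == x
  · by_cases h2 : (0 : ℕ) == y
    · have := eq_of_beq h1; have := eq_of_beq h2; omega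
    · rw [if_neg h2] at hy; omega
  · rw [if_neg h1] at hx; omega

lemma eq_pair_of (v : Wd) (hc : ∀ x ∈ v, x = 0 ∨ x = 1)
    (h0 : v.count 0 = 1) (h1 : v.count 1 = 1) : v = [0,1] ∨ v = [1,0] := by
  have hlen : ∀ (w : Wd), (∀ x ∈ w, x = 0 ∨ x = 1) → w.length = w.count 0 + w.count 1 := by
    intro w hw
    induction w with
    | nil => simp
    | cons a t ih =>
      have ha := hw a List.mem_cons_self
      have ht := ih (fun x hx => hw x (List.mem_cons_of_mem a hx))
      rcases ha with rfl | rfl <;> simp [List.count_cons] <;> omega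
  have hl : v.length = 2 := by rw [hlen v hc, h0, h1]
  rcases v with _ | ⟨a, _ | ⟨b, _ | ⟨c, t⟩⟩⟩ <;> simp at hl
  rcases hc a (by simp) with rfl | rfl <;> rcases hc b (by simp) with rfl | rfl
  · simp [List.count_cons] at h0
  · left; rfl
  · right; rfl
  · simp [List.count_cons] at h1

lemma main_left (S : Type*) [Monoid S] (hcomm : ∀ a b : S, a * b = b * a) :
    ∃ A : Set (Wd × Wd), A.Finite ∧ (∀ e ∈ A, AlmostLinearId e ∧ Sat S e) ∧
      (∀ e : Wd × Wd, Sat S e → Consequence A e) := by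
  by_cases htriv : ∀ a b : ℕ, PP S a b → a = b
  · refine ⟨{(([0,1] : Wd), ([1,0] : Wd))}, Set.finite_singleton _, ?_, ?_⟩
    · rintro e he
      rw [Set.mem_singleton_iff] at he
      subst he
      exact ⟨al_comm, sat_comm_iff.mpr hcomm⟩
    · intro e he M _ hM
      have hcM : ∀ a b : M, a * b = b * a := sat_comm_iff.mp (hM _ rfl)
      obtain ⟨u, v⟩ := e
      refine sat_of_counts hcM u v ?_
      intro x g
      rw [htriv _ _ (he.count_pow x)]
  · push_neg at htriv
    obtain ⟨a, b, hab, hne⟩ := htriv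
    obtain ⟨r, s, hs, hrs, hchar⟩ := pp_struct ⟨a, b, hne, hab⟩
    refine ⟨{(([0,1] : Wd), ([1,0] : Wd)),
      ((List.replicate r 0 : Wd), (List.replicate (r+s) 0 : Wd))},
      (Set.finite_singleton _).insert _, ?_, ?_⟩
    · rintro e he
      simp only [Set.mem_insert_iff, Set.mem_singleton_iff] at he
      rcases he with rfl | rfl
      · exact ⟨al_comm, sat_comm_iff.mpr hcomm⟩
      · exact ⟨⟨al_rep r, al_rep (r+s)⟩, (sat_pow_iff r (r+s)).mpr hrs⟩
    · intro e he M _ hM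
      have hcM : ∀ a b : M, a * b = b * a :=
        sat_comm_iff.mp (hM _ (Set.mem_insert _ _))
      have hpM : ∀ g : M, g ^ r = g ^ (r + s) :=
        (sat_pow_iff r (r+s)).mp (hM _ (Set.mem_insert_of_mem _ rfl))
      obtain ⟨u, v⟩ := e
      refine sat_of_counts hcM u v ?_
      intro x g
      exact pow_eq_of_mod hs hpM g _ _ (hchar _ _ (he.count_pow x))

end MainAux

theorem stmt0 (S : Type*) [Monoid S] (hmu : Sat S sigmaMu)
    (hxy : ¬ Isoterm S [0, 1]) :
    (∃ A : Set (Wd × Wd), A.Finite ∧ (∀ e ∈ A, AlmostLinearId e ∧ Sat S e) ∧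
      (∀ e : Wd × Wd, Sat S e → Consequence A e)) ∨
    (∃ n : ℕ, 1 < n ∧ Sat S ([0], List.replicate n 0) ∧
      (∀ e : Wd × Wd, Sat S e → RegularId e)) := by
  classical
  by_cases hreg : ∀ e : Wd × Wd, Sat S e → RegularId e
  · by_cases hn : ∃ n : ℕ, 1 < n ∧ Sat S ([0], List.replicate n 0)
    · obtain ⟨n, h1, h2⟩ := hn
      exact Or.inr ⟨n, h1, h2, hreg⟩
    · push_neg at hn
      left
      rw [Isoterm] at hxy
      push_neg at hxy
      obtain ⟨v, hsv, hvne⟩ := hxy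
      have hrv : conW ([0,1] : Wd) = conW v := hreg _ hsv
      have hmem : ∀ x : ℕ, x ∈ v ↔ (x = 0 ∨ x = 1) := by
        intro x
        have h := Set.ext_iff.mp hrv x
        simp only [conW, Set.mem_setOf_eq] at h
        rw [← h]
        simp
      have hc : ∀ x ∈ v, x = 0 ∨ x = 1 := fun x hx => (hmem x).mp hx
      have hcnt : ∀ y : ℕ, ([0,1] : Wd).count y = 1 → y ∈ v → v.count y = 1 := by
        intro y hy hyv
        have hp := hsv.count_pow y
        rw [hy] at hp
        have hpos : 0 < v.count y := List.count_pos_iff.mpr hyv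
        by_contra hne2
        have h2 : 1 < v.count y := by omega
        exact hn (v.count y) h2 ((sat_xn_iff _).mpr (fun g => by simpa using hp g))
      have c0 : v.count 0 = 1 := hcnt 0 rfl ((hmem 0).mpr (Or.inl rfl))
      have c1 : v.count 1 = 1 := hcnt 1 rfl ((hmem 1).mpr (Or.inr rfl))
      rcases eq_pair_of v hc c0 c1 with h | h
      · exact absurd h hvne
      · subst h
        exact main_left S (sat_comm_iff.mp hsv)
  · left
    push_neg at hreg
    obtain ⟨e, hse, hir⟩ := hreg
    obtain ⟨u, v⟩ := e
    have hkey : ∃ (u' v' : Wd) (x : ℕ), Sat S (u', v') ∧ x ∈ u' ∧ x ∉ v' := by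
      simp only [RegularId, conW] at hir
      have hir2 : ¬ ∀ x : ℕ, (x ∈ u ↔ x ∈ v) := fun h => hir (Set.ext fun x => h x)
      obtain ⟨x, hx⟩ := not_forall.mp hir2
      rcases Classical.em (x ∈ u) with h | h
      · refine ⟨u, v, x, hse, h, fun hv => hx ⟨fun _ => hv, fun _ => h⟩⟩
      · have hv : x ∈ v := by
          by_contra hv
          exact hx ⟨fun h' => absurd h' h, fun h' => absurd h' hv⟩
        exact ⟨v, u, x, (fun φ => (hse φ).symm), hv, h⟩
    obtain ⟨u', v', x, hsat, hxu, hxv⟩ := hkey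
    have hp : 0 < u'.count x := List.count_pos_iff.mpr hxu
    have hpp : PP S (u'.count x) 0 := by
      have := hsat.count_pow x
      rwa [List.count_eq_zero.mpr hxv] at this
    have h1 : ∀ g : S, g ^ u'.count x = 1 := fun g => by simpa using hpp g
    have habS : ∀ a b : S, a * (a * (b * b)) = a * (b * (a * b)) := by
      intro a b
      have := hmu (fun n => if n = 0 then a else if n = 1 then b else 1)
      simpa [sigmaMu, evalWord] using this
    exact main_left S (comm_of_group hp h1 habS)
end

section
/- Every block-balanced identity satisfying property P_{1,2} is a consequence of {σ1, σ2}^δ, where σ1 is x y t1 x t2 y ≈ y x t1 x t2 y and σ2 is x t1 y t2 x y ≈ x t1 y t2 y x. -/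
/-- Property P₁,₂: same linear and non-linear variables, and for all variables
`x, y` of the content, the first occurrence of `x` precedes the last occurrence
of `y` on one side iff it does on the other side. -/
def P12 (e : Wd × Wd) : Prop :=
  linW e.1 = linW e.2 ∧ nonW e.1 = nonW e.2 ∧
  ∀ x ∈ conW e.1, ∀ y ∈ conW e.1,
    (firstIdx e.1 x < lastIdx e.1 y ↔ firstIdx e.2 x < lastIdx e.2 y)

section PartA

/-- One rewriting step using σ1 or σ2 (in either direction of the swapped pair). -/
def Step (w w' : Wd) : Prop :=
  ∃ p m1 m2 q : Wd, ∃ a b : ℕ,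
    (w = p ++ a::b::(m1 ++ a::(m2 ++ b::q)) ∧ w' = p ++ b::a::(m1 ++ a::(m2 ++ b::q)))
    ∨ (w = p ++ a::b::(m1 ++ b::(m2 ++ a::q)) ∧ w' = p ++ b::a::(m1 ++ b::(m2 ++ a::q)))
    ∨ (w = p ++ a::(m1 ++ b::(m2 ++ a::b::q)) ∧ w' = p ++ a::(m1 ++ b::(m2 ++ b::a::q)))
    ∨ (w = p ++ b::(m1 ++ a::(m2 ++ a::b::q)) ∧ w' = p ++ b::(m1 ++ a::(m2 ++ b::a::q)))

lemma evalWord_append {M : Type*} [Monoid M] (ψ : ℕ → M) (l1 l2 : Wd) :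
    evalWord ψ (l1 ++ l2) = evalWord ψ l1 * evalWord ψ l2 := by
  simp [evalWord]

lemma step_sound {M : Type*} [Monoid M] (h1 : Sat M sigma1) (h2 : Sat M sigma2)
    {w w' : Wd} (hst : Step w w') (ψ : ℕ → M) : evalWord ψ w = evalWord ψ w' := by
  obtain ⟨p, m1, m2, q, a, b, hc⟩ := hst
  rcases hc with ⟨h, h'⟩ | ⟨h, h'⟩ | ⟨h, h'⟩ | ⟨h, h'⟩ <;> subst h <;> subst h'
  · have := h1 (fun n => if n = 0 then ψ a else if n = 1 then ψ b else
      if n = 2 then evalWord ψ m1 else evalWord ψ m2)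
    simp only [Sat, sigma1, evalWord, List.map_cons, List.map_nil, List.prod_cons,
      List.prod_nil, mul_one, if_true, if_false] at this
    norm_num at this
    have := congrArg (fun z => evalWord ψ p * (z * evalWord ψ q)) this
    simpa [evalWord, mul_assoc] using this
  · have := (h1 (fun n => if n = 0 then ψ b else if n = 1 then ψ a else
      if n = 2 then evalWord ψ m1 else evalWord ψ m2)).symm
    simp only [Sat, sigma1, evalWord, List.map_cons, List.map_nil, List.prod_cons,
      List.prod_nil, mul_one, if_true, if_false] at this
    norm_num at this
    have := congrArg (fun z => evalWord ψ p * (z * evalWord ψ q)) this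
    simpa [evalWord, mul_assoc] using this
  · have := h2 (fun n => if n = 0 then ψ a else if n = 1 then ψ b else
      if n = 2 then evalWord ψ m1 else evalWord ψ m2)
    simp only [Sat, sigma2, evalWord, List.map_cons, List.map_nil, List.prod_cons,
      List.prod_nil, mul_one, if_true, if_false] at this
    norm_num at this
    have := congrArg (fun z => evalWord ψ p * (z * evalWord ψ q)) this
    simpa [evalWord, mul_assoc] using this
  · have := (h2 (fun n => if n = 0 then ψ b else if n = 1 then ψ a else
      if n = 2 then evalWord ψ m1 else evalWord ψ m2)).symm
    simp only [Sat, sigma2, evalWord, List.map_cons, List.map_nil, List.prod_cons,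
      List.prod_nil, mul_one, if_true, if_false] at this
    norm_num at this
    have := congrArg (fun z => evalWord ψ p * (z * evalWord ψ q)) this
    simpa [evalWord, mul_assoc] using this

lemma rtg_sound {M : Type*} [Monoid M] (h1 : Sat M sigma1) (h2 : Sat M sigma2)
    {u v : Wd} (h : Relation.ReflTransGen Step u v) : Sat M (u, v) := by
  intro ψ
  induction h with
  | refl => rfl
  | tail _ hst ih => exact ih.trans (step_sound h1 h2 hst ψ)

lemma restrict_univ (w : Wd) : restrict w Set.univ = w := by
  rw [restrict, List.filter_eq_self]
  intro a _
  exact @decide_eq_true _ (Classical.propDecidable _) (Set.mem_univ a)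

lemma sigma_mem_delta : sigma1 ∈ delta {sigma1, sigma2} ∧ sigma2 ∈ delta {sigma1, sigma2} := by
  constructor
  · exact ⟨sigma1, by simp, Set.univ, by simp [restrict_univ]⟩
  · exact ⟨sigma2, by simp, Set.univ, by simp [restrict_univ]⟩

end PartA

section Tokens

/-- Bump the counter of letter `y`. -/
def bumpc (c : ℕ → ℕ) (y : ℕ) : ℕ → ℕ := fun x => if x = y then c x + 1 else c x

/-- Annotate each letter with its occurrence index, counters starting at `c`. -/
def tokAux (c : ℕ → ℕ) : Wd → List (ℕ × ℕ)
  | [] => []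
  | y :: w => (y, c y) :: tokAux (bumpc c y) w

/-- Token list of a word. -/
def tok (w : Wd) : List (ℕ × ℕ) := tokAux (fun _ => 0) w

/-- Position of a token in a token list. -/
def tIdx : List (ℕ × ℕ) → ℕ × ℕ → ℕ
  | [], _ => 0
  | t :: K, s => if s = t then 0 else tIdx K s + 1

lemma tIdx_cons_self (K : List (ℕ × ℕ)) (s : ℕ × ℕ) : tIdx (s :: K) s = 0 := by
  simp [tIdx]

lemma tIdx_cons_ne (K : List (ℕ × ℕ)) {s t : ℕ × ℕ} (h : s ≠ t) :
    tIdx (t :: K) s = tIdx K s + 1 := by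
  simp [tIdx, h]

lemma tIdx_eq_length_of_not_mem {K : List (ℕ × ℕ)} {s : ℕ × ℕ} (h : s ∉ K) :
    tIdx K s = K.length := by
  induction K with
  | nil => rfl
  | cons t K ih =>
    have hst : s ≠ t := fun hh => h (hh ▸ List.mem_cons_self)
    rw [tIdx_cons_ne K hst, ih (fun hh => h (List.mem_cons_of_mem t hh))]
    simp

lemma tIdx_lt_length_of_mem {K : List (ℕ × ℕ)} {s : ℕ × ℕ} (h : s ∈ K) :
    tIdx K s < K.length := by
  induction K with
  | nil => cases h
  | cons t K ih =>
    by_cases hst : s = t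
    · subst hst; simp [tIdx_cons_self]
    · rcases List.mem_cons.mp h with h' | h'
      · exact absurd h' hst
      · rw [tIdx_cons_ne K hst]; simpa using ih h'

lemma tIdx_inj {K : List (ℕ × ℕ)} {s t : ℕ × ℕ} (hs : s ∈ K) (ht : t ∈ K)
    (h : tIdx K s = tIdx K t) : s = t := by
  induction K with
  | nil => cases hs
  | cons r K ih =>
    by_cases hsr : s = r <;> by_cases htr : t = r
    · rw [hsr, htr]
    · rw [hsr] at h ⊢
      rw [tIdx_cons_self, tIdx_cons_ne K htr] at h
      omega
    · rw [htr] at h ⊢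
      rw [tIdx_cons_self, tIdx_cons_ne K hsr] at h
      omega
    · rw [tIdx_cons_ne K hsr, tIdx_cons_ne K htr] at h
      rcases List.mem_cons.mp hs with h' | h'
      · exact absurd h' hsr
      rcases List.mem_cons.mp ht with h'' | h''
      · exact absurd h'' htr
      exact ih h' h'' (by omega)

lemma tIdx_append_of_not_mem {K1 : List (ℕ × ℕ)} (K2 : List (ℕ × ℕ)) {s : ℕ × ℕ}
    (h : s ∉ K1) : tIdx (K1 ++ K2) s = K1.length + tIdx K2 s := by
  induction K1 with
  | nil => simp
  | cons t K1 ih =>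
    have hst : s ≠ t := fun hh => h (hh ▸ List.mem_cons_self)
    rw [List.cons_append, tIdx_cons_ne _ hst, ih (fun hh => h (List.mem_cons_of_mem t hh))]
    simp
    omega

lemma map_fst_tokAux (c : ℕ → ℕ) (w : Wd) : (tokAux c w).map Prod.fst = w := by
  induction w generalizing c with
  | nil => rfl
  | cons y w ih => simp [tokAux, ih]

lemma mem_tokAux {x i : ℕ} {c : ℕ → ℕ} {w : Wd} :
    (x, i) ∈ tokAux c w ↔ c x ≤ i ∧ i < c x + w.count x := by
  induction w generalizing c with
  | nil => simp [tokAux]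
  | cons y w ih =>
    by_cases hxy : x = y
    · subst hxy
      have hb : bumpc c x x = c x + 1 := by simp [bumpc]
      simp only [tokAux, List.mem_cons, ih, hb, List.count_cons_self,
        Prod.mk.injEq, true_and]
      constructor
      · rintro (rfl | ⟨h1, h2⟩) <;> omega
      · rintro ⟨h1, h2⟩
        rcases Nat.eq_or_lt_of_le h1 with h' | h'
        · left; omega
        · right; omega
    · have hb : bumpc c y x = c x := by simp [bumpc, hxy]
      simp only [tokAux, List.mem_cons, ih, hb, List.count_cons_of_ne (Ne.symm hxy), Prod.mk.injEq, hxy,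
        false_and, false_or]

lemma mem_tok {x i : ℕ} {w : Wd} : (x, i) ∈ tok w ↔ i < w.count x := by
  simp [tok, mem_tokAux]

lemma tokAux_append (c : ℕ → ℕ) (w1 w2 : Wd) :
    tokAux c (w1 ++ w2) = tokAux c w1 ++ tokAux (fun x => c x + w1.count x) w2 := by
  induction w1 generalizing c with
  | nil => simp [tokAux]
  | cons y w1 ih =>
    simp only [List.cons_append, tokAux, List.append_assoc, List.append_eq]
    rw [ih]
    have : (fun x => bumpc c y x + w1.count x) = (fun x => c x + (y :: w1).count x) := by
      funext x
      by_cases hxy : x = y <;> simp [bumpc, hxy, List.count_cons] <;> omega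
    rw [this]

lemma length_tokAux (c : ℕ → ℕ) (w : Wd) : (tokAux c w).length = w.length := by
  induction w generalizing c with
  | nil => rfl
  | cons y w ih => simp [tokAux, ih]

lemma pairwise_sameletter_tokAux (c : ℕ → ℕ) (w : Wd) :
    (tokAux c w).Pairwise (fun s t => s.1 = t.1 → s.2 < t.2) := by
  induction w generalizing c with
  | nil => exact List.Pairwise.nil
  | cons y w ih =>
    refine List.Pairwise.cons ?_ (ih _)
    rintro ⟨x, i⟩ hmem h1
    simp only at h1
    subst h1
    have := (mem_tokAux.mp hmem).1
    simp [bumpc] at this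
    omega

lemma nodup_tokAux (c : ℕ → ℕ) (w : Wd) : (tokAux c w).Nodup := by
  refine (pairwise_sameletter_tokAux c w).imp ?_
  rintro ⟨x, i⟩ ⟨y, j⟩ h heq
  rw [heq] at h
  exact absurd (h rfl) (lt_irrefl _)

lemma tIdx_tokAux_first (c : ℕ → ℕ) (w : Wd) (x : ℕ) :
    tIdx (tokAux c w) (x, c x) = w.idxOf x := by
  induction w generalizing c with
  | nil => rfl
  | cons y w ih =>
    by_cases hxy : x = y
    · subst hxy
      rw [tokAux, tIdx_cons_self, List.idxOf_cons_self]
    · have h1 : (x, c x) ≠ (y, c y) := by simp [hxy]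
      rw [tokAux, tIdx_cons_ne _ h1, List.idxOf_cons_ne _ (Ne.symm hxy)]
      have hb : bumpc c y x = c x := by simp [bumpc, hxy]
      rw [← hb, ih]

lemma tIdx_tok_first (w : Wd) (x : ℕ) : tIdx (tok w) (x, 0) = firstIdx w x :=
  tIdx_tokAux_first (fun _ => 0) w x

lemma exists_last_split {x : ℕ} {w : Wd} (h : x ∈ w) :
    ∃ p q : Wd, w = p ++ x :: q ∧ x ∉ q := by
  induction w with
  | nil => cases h
  | cons y w ih =>
    by_cases hxw : x ∈ w
    · obtain ⟨p, q, rfl, hq⟩ := ih hxw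
      exact ⟨y :: p, q, rfl, hq⟩
    · rcases List.mem_cons.mp h with rfl | h'
      · exact ⟨[], w, rfl, hxw⟩
      · exact absurd h' hxw

lemma tIdx_tok_last {x : ℕ} {w : Wd} (h : x ∈ w) :
    tIdx (tok w) (x, w.count x - 1) = lastIdx w x := by
  obtain ⟨p, q, rfl, hq⟩ := exists_last_split h
  have hcq : q.count x = 0 := List.count_eq_zero.mpr hq
  have hcnt : (p ++ x :: q).count x = p.count x + 1 := by
    simp [List.count_append, hcq]
  have hrev : (p ++ x :: q).reverse.idxOf x = q.length := by
    rw [List.reverse_append, List.reverse_cons, List.append_assoc,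
      List.idxOf_append_of_notMem (by simp [hq])]
    simp
  have hlast : lastIdx (p ++ x :: q) x = p.length := by
    rw [lastIdx, hrev]
    simp only [List.length_append, List.length_cons]
    omega
  have hc1 : (p ++ x :: q).count x - 1 = p.count x := by omega
  rw [hc1, hlast]
  have hsplit : tok (p ++ x :: q) =
      tokAux (fun _ => 0) p ++ (x, p.count x) ::
        tokAux (bumpc (fun z => 0 + p.count z) x) q := by
    rw [tok, tokAux_append, tokAux]
    simp
  rw [hsplit]
  have hnot : (x, p.count x) ∉ tokAux (fun _ => 0) p := by
    intro hmem
    have := (mem_tokAux.mp hmem).2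
    omega
  rw [tIdx_append_of_not_mem _ hnot, tIdx_cons_self, length_tokAux]
  omega

end Tokens

section OrdPairs

variable {α : Type*}

/-- All ordered pairs (earlier element, later element) of a list. -/
def ordPairs : List α → List (α × α)
  | [] => []
  | a :: l => l.map (fun b => (a, b)) ++ ordPairs l

lemma mem_ordPairs_cons {x y a : α} {L : List α} :
    (x, y) ∈ ordPairs (a :: L) ↔ (x = a ∧ y ∈ L) ∨ (x, y) ∈ ordPairs L := by
  simp [ordPairs, Prod.ext_iff, eq_comm]
  tauto

lemma mem_of_mem_ordPairs {x y : α} {L : List α} (h : (x, y) ∈ ordPairs L) :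
    x ∈ L ∧ y ∈ L := by
  induction L with
  | nil => cases h
  | cons a L ih =>
    rcases mem_ordPairs_cons.mp h with ⟨rfl, hy⟩ | h'
    · exact ⟨List.mem_cons_self, List.mem_cons_of_mem _ hy⟩
    · exact ⟨List.mem_cons_of_mem _ (ih h').1, List.mem_cons_of_mem _ (ih h').2⟩

lemma mem_ordPairs_append {x y : α} {A B : List α} :
    (x, y) ∈ ordPairs (A ++ B) ↔
      (x, y) ∈ ordPairs A ∨ (x, y) ∈ ordPairs B ∨ (x ∈ A ∧ y ∈ B) := by
  induction A with
  | nil => simp [ordPairs]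
  | cons a A ih =>
    rw [List.cons_append, mem_ordPairs_cons, ih, mem_ordPairs_cons]
    simp only [List.mem_append, List.mem_cons]
    tauto

lemma forall_ordPairs_of_pairwise {R : α → α → Prop} {L : List α}
    (h : L.Pairwise R) {x y : α} (hm : (x, y) ∈ ordPairs L) : R x y := by
  induction L with
  | nil => cases hm
  | cons a L ih =>
    rcases mem_ordPairs_cons.mp hm with ⟨rfl, hy⟩ | h'
    · exact (List.pairwise_cons.mp h).1 y hy
    · exact ih (List.pairwise_cons.mp h).2 h'

lemma pairwise_of_forall_ordPairs {R : α → α → Prop} {L : List α}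
    (h : ∀ x y, (x, y) ∈ ordPairs L → R x y) : L.Pairwise R := by
  induction L with
  | nil => exact List.Pairwise.nil
  | cons a L ih =>
    refine List.Pairwise.cons ?_ (ih fun x y hm => h x y (mem_ordPairs_cons.mpr (Or.inr hm)))
    intro y hy
    exact h a y (mem_ordPairs_cons.mpr (Or.inl ⟨rfl, hy⟩))

lemma mem_ordPairs_filter {P : α → Bool} {x y : α} {L : List α}
    (h : (x, y) ∈ ordPairs L) (hx : P x) (hy : P y) :
    (x, y) ∈ ordPairs (L.filter P) := by
  induction L with
  | nil => cases h
  | cons a L ih =>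
    rcases mem_ordPairs_cons.mp h with ⟨rfl, hmy⟩ | h'
    · rw [List.filter_cons, if_pos hx]
      exact mem_ordPairs_cons.mpr (Or.inl ⟨rfl, List.mem_filter.mpr ⟨hmy, hy⟩⟩)
    · rw [List.filter_cons]
      by_cases hPa : P a
      · rw [if_pos hPa]
        exact mem_ordPairs_cons.mpr (Or.inr (ih h'))
      · rw [if_neg hPa]
        exact ih h'

lemma ordPairs_filter_subset {P : α → Bool} {x y : α} {L : List α}
    (h : (x, y) ∈ ordPairs (L.filter P)) : (x, y) ∈ ordPairs L := by
  induction L with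
  | nil => simp at h; cases h
  | cons a L ih =>
    rw [List.filter_cons] at h
    by_cases hPa : P a
    · rw [if_pos hPa] at h
      rcases mem_ordPairs_cons.mp h with ⟨rfl, hy⟩ | h'
      · exact mem_ordPairs_cons.mpr (Or.inl ⟨rfl, (List.mem_filter.mp hy).1⟩)
      · exact mem_ordPairs_cons.mpr (Or.inr (ih h'))
    · rw [if_neg hPa] at h
      exact mem_ordPairs_cons.mpr (Or.inr (ih h))

end OrdPairs

section TokOrd

lemma tIdx_lt_of_ordPairs {K : List (ℕ × ℕ)} (hnd : K.Nodup) {s t : ℕ × ℕ}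
    (h : (s, t) ∈ ordPairs K) : tIdx K s < tIdx K t := by
  induction K with
  | nil => cases h
  | cons a K ih =>
    rcases mem_ordPairs_cons.mp h with ⟨rfl, hy⟩ | h'
    · have hts : t ≠ s := fun hh => (List.nodup_cons.mp hnd).1 (hh ▸ hy)
      rw [tIdx_cons_self, tIdx_cons_ne _ hts]
      omega
    · have hs := (mem_of_mem_ordPairs h').1
      have ht := (mem_of_mem_ordPairs h').2
      have hsa : s ≠ a := fun hh => (List.nodup_cons.mp hnd).1 (hh ▸ hs)
      have hta : t ≠ a := fun hh => (List.nodup_cons.mp hnd).1 (hh ▸ ht)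
      rw [tIdx_cons_ne _ hsa, tIdx_cons_ne _ hta]
      have := ih (List.nodup_cons.mp hnd).2 h'
      omega

lemma ordPairs_of_tIdx_lt {K : List (ℕ × ℕ)} {s t : ℕ × ℕ} (hs : s ∈ K) (ht : t ∈ K)
    (h : tIdx K s < tIdx K t) : (s, t) ∈ ordPairs K := by
  induction K with
  | nil => cases hs
  | cons a K ih =>
    by_cases hsa : s = a
    · subst hsa
      rcases List.mem_cons.mp ht with rfl | ht'
      · omega
      · exact mem_ordPairs_cons.mpr (Or.inl ⟨rfl, ht'⟩)
    · rcases List.mem_cons.mp hs with rfl | hs'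
      · exact absurd rfl hsa
      by_cases hta : t = a
      · subst hta
        rw [tIdx_cons_self, tIdx_cons_ne _ hsa] at h
        omega
      · rcases List.mem_cons.mp ht with rfl | ht'
        · exact absurd rfl hta
        rw [tIdx_cons_ne _ hsa, tIdx_cons_ne _ hta] at h
        exact mem_ordPairs_cons.mpr (Or.inr (ih hs' ht' (by omega)))

end TokOrd

section Measure

variable {α : Type*}

lemma countP_ordPairs_append (p : α × α → Bool) (A B : List α) :
    (ordPairs (A ++ B)).countP p =
      (ordPairs A).countP p + (A.map (fun a => ((B.map (fun b => (a, b))).countP p))).sum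
        + (ordPairs B).countP p := by
  induction A with
  | nil => simp [ordPairs]
  | cons a A ih =>
    simp only [List.cons_append, ordPairs, List.countP_append, List.map_append,
      List.map_cons, List.sum_cons, ih, List.append_eq]
    omega

lemma countP_ordPairs_swap (p : α × α → Bool) (A B : List α) (s t : α)
    (hst : p (s, t) = true) (hts : p (t, s) = false) :
    (ordPairs (A ++ s :: t :: B)).countP p = (ordPairs (A ++ t :: s :: B)).countP p + 1 := by
  rw [countP_ordPairs_append, countP_ordPairs_append]
  have hcross : (A.map (fun a => (((s :: t :: B).map (fun b => (a, b))).countP p))).sum =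
      (A.map (fun a => (((t :: s :: B).map (fun b => (a, b))).countP p))).sum := by
    congr 1
    apply List.map_congr_left
    intro a _
    simp only [List.map_cons, List.countP_cons]
    omega
  rw [hcross]
  have h1 : (ordPairs (s :: t :: B)).countP p = (ordPairs (t :: s :: B)).countP p + 1 := by
    simp [ordPairs, List.countP_append, List.countP_cons, hst, hts]
    omega
  omega

lemma ordPairs_swap_mem {x y s t : α} {A B : List α}
    (h : (x, y) ∈ ordPairs (A ++ t :: s :: B)) :
    (x, y) ∈ ordPairs (A ++ s :: t :: B) ∨ (x = t ∧ y = s) := by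
  rw [mem_ordPairs_append] at h
  rcases h with h | h | h
  · exact Or.inl (mem_ordPairs_append.mpr (Or.inl h))
  · rw [mem_ordPairs_cons, mem_ordPairs_cons] at h
    simp only [List.mem_cons] at h
    rcases h with ⟨rfl, rfl | hy⟩ | ⟨rfl, hy⟩ | h'
    · exact Or.inr ⟨rfl, rfl⟩
    · exact Or.inl (mem_ordPairs_append.mpr (Or.inr (Or.inl
        (mem_ordPairs_cons.mpr (Or.inr (mem_ordPairs_cons.mpr (Or.inl ⟨rfl, hy⟩)))))))
    · exact Or.inl (mem_ordPairs_append.mpr (Or.inr (Or.inl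
        (mem_ordPairs_cons.mpr (Or.inl ⟨rfl, List.mem_cons_of_mem _ hy⟩)))))
    · exact Or.inl (mem_ordPairs_append.mpr (Or.inr (Or.inl
        (mem_ordPairs_cons.mpr (Or.inr (mem_ordPairs_cons.mpr (Or.inr h')))))))
  · refine Or.inl (mem_ordPairs_append.mpr (Or.inr (Or.inr ⟨h.1, ?_⟩)))
    have := h.2
    simp only [List.mem_cons] at this ⊢
    tauto

end Measure

section TokFilter

lemma tokAux_filter_congr (P : ℕ → Bool) {c c' : ℕ → ℕ} (h : ∀ x, P x = true → c x = c' x)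
    (w : Wd) : (tokAux c w).filter (fun s => P s.1) = (tokAux c' w).filter (fun s => P s.1) := by
  induction w generalizing c c' with
  | nil => rfl
  | cons y w ih =>
    have hbump : ∀ x, P x = true → bumpc c y x = bumpc c' y x := by
      intro x hx
      simp only [bumpc]
      rw [h x hx]
    simp only [tokAux, List.filter_cons]
    by_cases hPy : P y = true
    · rw [if_pos (by simpa using hPy), if_pos (by simpa using hPy), h y hPy, ih hbump]
    · rw [if_neg (by simpa using hPy), if_neg (by simpa using hPy), ih hbump]

lemma tokAux_filter (P : ℕ → Bool) (c : ℕ → ℕ) (w : Wd) :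
    tokAux c (w.filter P) = (tokAux c w).filter (fun s => P s.1) := by
  induction w generalizing c with
  | nil => rfl
  | cons y w ih =>
    simp only [List.filter_cons, tokAux]
    by_cases hPy : P y = true
    · rw [if_pos hPy]
      simp only [tokAux]
      rw [ih]
      simp [hPy]
    · have hcc : ∀ x, P x = true → c x = bumpc c y x := by
        intro x hx
        have hxy : x ≠ y := fun hh => hPy (hh ▸ hx)
        simp [bumpc, hxy]
      rw [if_neg hPy, ih, tokAux_filter_congr P hcc w]
      simp [hPy]

lemma tok_restrict (w : Wd) (X : Set ℕ) :
    tok (restrict w X) =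
      (tok w).filter (fun s => @decide (s.1 ∈ X) (Classical.propDecidable _)) := by
  rw [restrict, tok, tok, tokAux_filter]

end TokFilter

section Chain

lemma chain_good (K : List (ℕ × ℕ)) (u : Wd) :
    ∀ c : ℕ → ℕ,
      (∀ p a b q, u = p ++ a :: b :: q →
        tIdx K (a, c a + p.count a) ≤ tIdx K (b, c b + (p ++ [a]).count b)) →
      List.Chain' (fun s t => tIdx K s ≤ tIdx K t) (tokAux c u) := by
  induction u with
  | nil => intro c _; exact List.isChain_nil
  | cons x w ih =>
    intro c h
    cases w with
    | nil => exact List.isChain_singleton _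
    | cons y w' =>
      simp only [tokAux, List.Chain', List.isChain_cons_cons]
      constructor
      · have h0 := h [] x y w' rfl
        have e1 : c x + List.count x ([] : Wd) = c x := by simp
        have e2 : c y + List.count y (([] : Wd) ++ [x]) = bumpc c x y := by
          by_cases hyx : y = x <;> simp [bumpc, hyx, eq_comm (a := x), List.count_cons]
        rw [e1, e2] at h0
        exact h0
      · have := ih (bumpc c x) ?_
        · exact this
        · intro p a b q hpq
          have h1 := h (x :: p) a b q (by simp [hpq])
          have e1 : c a + List.count a (x :: p) = bumpc c x a + List.count a p := by
            by_cases hax : a = x <;> simp [bumpc, hax, List.count_cons] <;> omega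
          have e2 : c b + List.count b ((x :: p) ++ [a]) =
              bumpc c x b + List.count b (p ++ [a]) := by
            by_cases hbx : b = x <;>
              simp [bumpc, hbx, List.count_cons, List.count_append] <;> omega
          rw [e1, e2] at h1
          exact h1

lemma exists_bad_pair (K : List (ℕ × ℕ)) (u : Wd)
    (h : (ordPairs (tok u)).countP (fun pr => decide (tIdx K pr.2 < tIdx K pr.1)) ≠ 0) :
    ∃ p a b q, u = p ++ a :: b :: q ∧
      tIdx K (b, (p ++ [a]).count b) < tIdx K (a, p.count a) := by
  by_contra hc
  push_neg at hc
  apply h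
  rw [List.countP_eq_zero]
  rintro ⟨s, t⟩ hm
  have hch : List.Chain' (fun s t => tIdx K s ≤ tIdx K t) (tok u) := by
    apply chain_good
    intro p a b q hpq
    have := hc p a b q hpq
    simpa using this
  haveI : IsTrans (ℕ × ℕ) (fun s t => tIdx K s ≤ tIdx K t) :=
    ⟨fun _ _ _ h1 h2 => le_trans h1 h2⟩
  haveI : Trans (fun s t : ℕ × ℕ => tIdx K s ≤ tIdx K t) (fun s t => tIdx K s ≤ tIdx K t)
      (fun s t => tIdx K s ≤ tIdx K t) := ⟨fun h1 h2 => le_trans h1 h2⟩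
  have hpw := List.isChain_iff_pairwise.mp hch
  have := forall_ordPairs_of_pairwise hpw hm
  simp only [decide_eq_true_eq]
  omega

end Chain

section Base

lemma eq_of_msr_zero (v u : Wd)
    (h0 : (ordPairs (tok u)).countP
      (fun pr => decide (tIdx (tok v) pr.2 < tIdx (tok v) pr.1)) = 0)
    (hcnt : ∀ x, u.count x = v.count x) : u = v := by
  have hndu : (tok u).Nodup := nodup_tokAux _ u
  have hndv : (tok v).Nodup := nodup_tokAux _ v
  have hperm : (tok u).Perm (tok v) := by
    rw [List.perm_ext_iff_of_nodup hndu hndv]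
    rintro ⟨x, i⟩
    rw [mem_tok, mem_tok, hcnt x]
  have hall : ∀ s t : ℕ × ℕ, (s, t) ∈ ordPairs (tok u) →
      tIdx (tok v) s < tIdx (tok v) t := by
    intro s t hm
    have hle : ¬ (tIdx (tok v) t < tIdx (tok v) s) := by
      have := List.countP_eq_zero.mp h0 (s, t) hm
      simpa using this
    have hsv : s ∈ tok v := hperm.subset (mem_of_mem_ordPairs hm).1
    have htv : t ∈ tok v := hperm.subset (mem_of_mem_ordPairs hm).2
    have hne : s ≠ t := forall_ordPairs_of_pairwise hndu hm
    have hne' : tIdx (tok v) s ≠ tIdx (tok v) t := fun heq => hne (tIdx_inj hsv htv heq)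
    omega
  have hsort1 : (tok u).Pairwise (fun s t => tIdx (tok v) s < tIdx (tok v) t) :=
    pairwise_of_forall_ordPairs hall
  have hsort2 : (tok v).Pairwise (fun s t => tIdx (tok v) s < tIdx (tok v) t) :=
    pairwise_of_forall_ordPairs (fun s t hm => tIdx_lt_of_ordPairs hndv hm)
  haveI : IsAntisymm (ℕ × ℕ) (fun s t => tIdx (tok v) s < tIdx (tok v) t) :=
    ⟨fun a b h1 h2 => absurd h2 (by omega)⟩
  have htoks : tok u = tok v := List.Perm.eq_of_pairwise (fun _ _ _ _ h1 h2 => absurd h2 (by omega)) hsort1 hsort2 hperm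
  calc u = (tok u).map Prod.fst := (map_fst_tokAux _ u).symm
    _ = (tok v).map Prod.fst := by rw [htoks]
    _ = v := map_fst_tokAux _ v

end Base

section MainStep

/-- Pair types whose relative order is determined by the hypotheses. -/
abbrev RigidP (v : Wd) (s t : ℕ × ℕ) : Prop :=
  s.1 = t.1 ∨ v.count s.1 = 1 ∨ v.count t.1 = 1 ∨
    (s.2 + 1 = v.count s.1 ∧ t.2 = 0) ∨ (s.2 = 0 ∧ t.2 + 1 = v.count t.1)

lemma tok_decomp (p q : Wd) (a b : ℕ) :
    tok (p ++ a :: b :: q) = tokAux (fun _ => 0) p ++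
      (a, p.count a) :: (b, (p ++ [a]).count b) ::
        tokAux (bumpc (bumpc (fun x => p.count x) a) b) q := by
  rw [tok, tokAux_append]
  have h1 : (fun x => (fun _ => 0) x + List.count x p) = fun x => List.count x p := by
    funext x; simp
  rw [h1]
  simp only [tokAux]
  have h2 : bumpc (fun x => List.count x p) a b = List.count b (p ++ [a]) := by
    by_cases hba : b = a
    · subst hba; simp [bumpc, List.count_append]
    · have hba0 : List.count b [a] = 0 :=
        List.count_eq_zero.mpr (fun h => hba (List.mem_singleton.mp h))
      simp [bumpc, hba, List.count_append, hba0]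
  rw [h2]

lemma bumpc_comm (c : ℕ → ℕ) (a b : ℕ) : bumpc (bumpc c a) b = bumpc (bumpc c b) a := by
  funext x
  simp only [bumpc]
  split_ifs <;> omega

/-- The main induction: from the invariants, `u` reaches `v` by steps. -/
lemma main_reach (v : Wd) :
    ∀ n u, (ordPairs (tok u)).countP
        (fun pr => decide (tIdx (tok v) pr.2 < tIdx (tok v) pr.1)) ≤ n →
      (∀ x, u.count x = v.count x) →
      (∀ s t, (s, t) ∈ ordPairs (tok u) → RigidP v s t →
        tIdx (tok v) s < tIdx (tok v) t) →
      Relation.ReflTransGen Step u v := by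
  intro n
  induction n with
  | zero =>
    intro u hm hcnt _
    rw [eq_of_msr_zero v u (Nat.le_zero.mp hm) hcnt]
  | succ n ih =>
    intro u hm hcnt hI2
    by_cases h0 : (ordPairs (tok u)).countP
        (fun pr => decide (tIdx (tok v) pr.2 < tIdx (tok v) pr.1)) = 0
    · rw [eq_of_msr_zero v u h0 hcnt]
    · obtain ⟨p, a, b, q, rfl, hbad⟩ := exists_bad_pair (tok v) _ h0
      -- the two adjacent tokens
      have htoku := tok_decomp p q a b
      have hmem_st : ((a, p.count a), (b, (p ++ [a]).count b)) ∈
          ordPairs (tok (p ++ a :: b :: q)) := by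
        rw [htoku]
        exact mem_ordPairs_append.mpr (Or.inr (Or.inl (mem_ordPairs_cons.mpr
          (Or.inl ⟨rfl, List.mem_cons_self⟩))))
      have hab : a ≠ b := by
        rintro rfl
        have := hI2 _ _ hmem_st (Or.inl rfl)
        omega
      have htt : List.count b (p ++ [a]) = List.count b p := by
        have hba0 : List.count b [a] = 0 :=
          List.count_eq_zero.mpr (fun h => hab (List.mem_singleton.mp h).symm)
        simp [List.count_append, hba0]
      rw [htt] at hbad hmem_st htoku
      -- counts in u
      have hcu : ∀ x, List.count x (p ++ a :: b :: q) =
          List.count x p + List.count x q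
            + (if x = a then 1 else 0) + (if x = b then 1 else 0) := by
        intro x
        simp only [List.count_append, List.count_cons, beq_iff_eq]
        split_ifs <;> omega
      -- the common continuation once we know the swap is available
      have key : Step (p ++ a :: b :: q) (p ++ b :: a :: q) →
          ¬ RigidP v (b, List.count b p) (a, List.count a p) →
          Relation.ReflTransGen Step (p ++ a :: b :: q) v := by
        intro hstep hnr
        have htoku' : tok (p ++ b :: a :: q) = tokAux (fun _ => 0) p ++
            (b, p.count b) :: (a, p.count a) ::
              tokAux (bumpc (bumpc (fun x => p.count x) a) b) q := by
          rw [tok_decomp p q b a]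
          have e1 : List.count a (p ++ [b]) = List.count a p := by
            have hab0 : List.count a [b] = 0 :=
              List.count_eq_zero.mpr (fun h => hab (List.mem_singleton.mp h))
            simp [List.count_append, hab0]
          rw [e1, bumpc_comm]
        refine Relation.ReflTransGen.head hstep (ih (p ++ b :: a :: q) ?_ ?_ ?_)
        · -- measure decreases
          have hswap := countP_ordPairs_swap
            (fun pr => decide (tIdx (tok v) pr.2 < tIdx (tok v) pr.1))
            (tokAux (fun _ => 0) p) (tokAux (bumpc (bumpc (fun x => p.count x) a) b) q)
            (a, p.count a) (b, p.count b)
            (by simpa using hbad) (by simp; omega)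
          rw [← htoku, ← htoku'] at hswap
          omega
        · intro x
          rw [← hcnt x, hcu x]
          simp only [List.count_append, List.count_cons, beq_iff_eq]
          split_ifs <;> omega
        · intro s' t' hm' hrig'
          rw [htoku'] at hm'
          rcases ordPairs_swap_mem hm' with h' | ⟨rfl, rfl⟩
          · exact hI2 s' t' (by rw [htoku]; exact h') hrig'
          · exact absurd hrig' hnr
      by_cases hq2 : a ∈ q ∧ b ∈ q
      · -- σ1 case: both letters occur later
        obtain ⟨hAq, hBq⟩ := hq2
        have hnr : ¬ RigidP v (b, List.count b p) (a, List.count a p) := by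
          have hca : 2 ≤ List.count a v := by
            rw [← hcnt a, hcu a]
            have := List.count_pos_iff.mpr hAq
            split_ifs <;> omega
          have hcb : 2 ≤ List.count b v := by
            rw [← hcnt b, hcu b]
            have := List.count_pos_iff.mpr hBq
            split_ifs <;> omega
          have hcb' : List.count b p + 1 < List.count b v := by
            rw [← hcnt b, hcu b]
            have := List.count_pos_iff.mpr hBq
            split_ifs <;> omega
          have hca' : List.count a p + 1 < List.count a v := by
            rw [← hcnt a, hcu a]
            have := List.count_pos_iff.mpr hAq
            split_ifs <;> omega
          rintro (h | h | h | h | h)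
          · exact hab (h.symm)
          · simp at h; omega
          · simp at h; omega
          · simp at h; omega
          · simp at h; omega
        apply key ?_ hnr
        obtain ⟨s1, s2, hq⟩ := List.append_of_mem hAq
        have hb' : b ∈ s1 ∨ b ∈ s2 := by
          rw [hq] at hBq
          rcases List.mem_append.mp hBq with h | h
          · exact Or.inl h
          · rcases List.mem_cons.mp h with h | h
            · exact absurd h (Ne.symm hab)
            · exact Or.inr h
        rcases hb' with hb | hb
        · obtain ⟨r1, r2, hr⟩ := List.append_of_mem hb
          rw [hq, hr]
          exact ⟨p, r1, r2, s2, a, b, Or.inr (Or.inl ⟨by simp, by simp⟩)⟩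
        · obtain ⟨r1, r2, hr⟩ := List.append_of_mem hb
          rw [hq, hr]
          exact ⟨p, s1, r1, r2, a, b, Or.inl ⟨by simp, by simp⟩⟩
      · by_cases hp2 : a ∈ p ∧ b ∈ p
        · -- σ2 case: both letters occur earlier
          obtain ⟨hAp, hBp⟩ := hp2
          have hnr : ¬ RigidP v (b, List.count b p) (a, List.count a p) := by
            have hpa := List.count_pos_iff.mpr hAp
            have hpb := List.count_pos_iff.mpr hBp
            have hca : 2 ≤ List.count a v := by
              rw [← hcnt a, hcu a]; split_ifs <;> omega
            have hcb : 2 ≤ List.count b v := by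
              rw [← hcnt b, hcu b]; split_ifs <;> omega
            rintro (h | h | h | h | h)
            · exact hab (h.symm)
            · simp at h; omega
            · simp at h; omega
            · simp at h; omega
            · simp at h; omega
          apply key ?_ hnr
          obtain ⟨s1, s2, hq⟩ := List.append_of_mem hAp
          have hb' : b ∈ s1 ∨ b ∈ s2 := by
            rw [hq] at hBp
            rcases List.mem_append.mp hBp with h | h
            · exact Or.inl h
            · rcases List.mem_cons.mp h with h | h
              · exact absurd h (Ne.symm hab)
              · exact Or.inr h
          rcases hb' with hb | hb
          · obtain ⟨r1, r2, hr⟩ := List.append_of_mem hb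
            rw [hq, hr]
            exact ⟨r1, r2, s2, q, a, b, Or.inr (Or.inr (Or.inr ⟨by simp, by simp⟩))⟩
          · obtain ⟨r1, r2, hr⟩ := List.append_of_mem hb
            rw [hq, hr]
            exact ⟨s1, r1, r2, q, a, b, Or.inr (Or.inr (Or.inl ⟨by simp, by simp⟩))⟩
        · -- rigid case: contradiction
          exfalso
          have hrig : RigidP v (a, List.count a p) (b, List.count b p) := by
            by_cases hAq : a ∈ q
            · have hBq : b ∉ q := fun h => hq2 ⟨hAq, h⟩
              by_cases hAp : a ∈ p
              · have hBp : b ∉ p := fun h => hp2 ⟨hAp, h⟩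
                refine Or.inr (Or.inr (Or.inl ?_))
                show List.count b v = 1
                rw [← hcnt b, hcu b]
                simp [List.count_eq_zero.mpr hBp, List.count_eq_zero.mpr hBq, Ne.symm hab]
              · refine Or.inr (Or.inr (Or.inr (Or.inr ⟨?_, ?_⟩)))
                · show List.count a p = 0
                  simp [List.count_eq_zero.mpr hAp]
                · show List.count b p + 1 = List.count b v
                  rw [← hcnt b, hcu b]
                  simp [List.count_eq_zero.mpr hBq, Ne.symm hab]
            · by_cases hBp : b ∈ p
              · have hAp : a ∉ p := fun h => hp2 ⟨h, hBp⟩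
                refine Or.inr (Or.inl ?_)
                show List.count a v = 1
                rw [← hcnt a, hcu a]
                simp [List.count_eq_zero.mpr hAp, List.count_eq_zero.mpr hAq, hab]
              · refine Or.inr (Or.inr (Or.inr (Or.inl ⟨?_, ?_⟩)))
                · show List.count a p + 1 = List.count a v
                  rw [← hcnt a, hcu a]
                  simp [List.count_eq_zero.mpr hAq, hab]
                · show List.count b p = 0
                  simp [List.count_eq_zero.mpr hBp]
          have := hI2 _ _ hmem_st hrig
          omega

end MainStep

section Initial

lemma initial_cnt {u v : Wd} (hbb : BlockBalanced (u, v)) : ∀ x, u.count x = v.count x := by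
  intro x
  have h := hbb x
  simp only [BlockBalanced] at h
  have hx : (fun a => @decide (a ∈ ({x} ∪ linW u : Set ℕ)) (Classical.propDecidable _)) x
      = true := @decide_eq_true _ (Classical.propDecidable _) (Set.mem_union_left _ rfl)
  have h1 : List.count x (restrict u ({x} ∪ linW u)) = List.count x u :=
    List.count_filter hx
  have h2 : List.count x (restrict v ({x} ∪ linW u)) = List.count x v :=
    List.count_filter hx
  rw [← h1, h, h2]

lemma initial_I2 {u v : Wd} (hbb : BlockBalanced (u, v)) (hp : P12 (u, v)) :
    ∀ s t, (s, t) ∈ ordPairs (tok u) → RigidP v s t →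
      tIdx (tok v) s < tIdx (tok v) t := by
  have hcnt := initial_cnt hbb
  have hp3 : ∀ x ∈ conW u, ∀ y ∈ conW u,
      (firstIdx u x < lastIdx u y ↔ firstIdx v x < lastIdx v y) := hp.2.2
  have hndu : (tok u).Nodup := nodup_tokAux _ u
  have hndv : (tok v).Nodup := nodup_tokAux _ v
  rintro ⟨x, i⟩ ⟨y, j⟩ hm hrig
  have hsu : (x, i) ∈ tok u := (mem_of_mem_ordPairs hm).1
  have htu : (y, j) ∈ tok u := (mem_of_mem_ordPairs hm).2
  have hsv : (x, i) ∈ tok v := mem_tok.mpr (by rw [← hcnt x]; exact mem_tok.mp hsu)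
  have htv : (y, j) ∈ tok v := mem_tok.mpr (by rw [← hcnt y]; exact mem_tok.mp htu)
  have hxu : x ∈ u := List.count_pos_iff.mp (lt_of_le_of_lt (Nat.zero_le i) (mem_tok.mp hsu))
  have hyu : y ∈ u := List.count_pos_iff.mp (lt_of_le_of_lt (Nat.zero_le j) (mem_tok.mp htu))
  have hxv : x ∈ v := List.count_pos_iff.mp (lt_of_le_of_lt (Nat.zero_le i) (mem_tok.mp hsv))
  have hyv : y ∈ v := List.count_pos_iff.mp (lt_of_le_of_lt (Nat.zero_le j) (mem_tok.mp htv))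
  by_cases hxy : x = y
  · -- same letter
    subst hxy
    have hij : i < j :=
      forall_ordPairs_of_pairwise (pairwise_sameletter_tokAux (fun _ => 0) u) hm rfl
    by_contra hlt
    push_neg at hlt
    have h' : tIdx (tok v) (x, j) < tIdx (tok v) (x, i) := by
      have hne : tIdx (tok v) (x, j) ≠ tIdx (tok v) (x, i) := by
        intro heq
        have := tIdx_inj htv hsv heq
        simp at this
        omega
      omega
    have := forall_ordPairs_of_pairwise (pairwise_sameletter_tokAux (fun _ => 0) v)
      (ordPairs_of_tIdx_lt htv hsv h') rfl
    omega
  · rcases hrig with h | h | h | h | h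
    · exact absurd h hxy
    · -- x is linear: use block-balancedness with the letter y
      have hPx : (fun s : ℕ × ℕ =>
          @decide (s.1 ∈ ({y} ∪ linW u : Set ℕ)) (Classical.propDecidable _)) (x, i) = true := by
        refine @decide_eq_true _ (Classical.propDecidable _) (Set.mem_union_right _ ?_)
        show List.count x u = 1
        rw [hcnt x]
        exact h
      have hPy : (fun s : ℕ × ℕ =>
          @decide (s.1 ∈ ({y} ∪ linW u : Set ℕ)) (Classical.propDecidable _)) (y, j) = true :=
        @decide_eq_true _ (Classical.propDecidable _) (Set.mem_union_left _ rfl)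
      have hmf := mem_ordPairs_filter (P := fun s : ℕ × ℕ =>
        @decide (s.1 ∈ ({y} ∪ linW u : Set ℕ)) (Classical.propDecidable _)) hm hPx hPy
      rw [← tok_restrict, hbb y, tok_restrict] at hmf
      exact tIdx_lt_of_ordPairs hndv (ordPairs_filter_subset hmf)
    · -- y is linear: use block-balancedness with the letter x
      have hPx : (fun s : ℕ × ℕ =>
          @decide (s.1 ∈ ({x} ∪ linW u : Set ℕ)) (Classical.propDecidable _)) (x, i) = true :=
        @decide_eq_true _ (Classical.propDecidable _) (Set.mem_union_left _ rfl)
      have hPy : (fun s : ℕ × ℕ =>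
          @decide (s.1 ∈ ({x} ∪ linW u : Set ℕ)) (Classical.propDecidable _)) (y, j) = true := by
        refine @decide_eq_true _ (Classical.propDecidable _) (Set.mem_union_right _ ?_)
        show List.count y u = 1
        rw [hcnt y]
        exact h
      have hmf := mem_ordPairs_filter (P := fun s : ℕ × ℕ =>
        @decide (s.1 ∈ ({x} ∪ linW u : Set ℕ)) (Classical.propDecidable _)) hm hPx hPy
      rw [← tok_restrict, hbb x, tok_restrict] at hmf
      exact tIdx_lt_of_ordPairs hndv (ordPairs_filter_subset hmf)
    · -- (x, i) is the last occurrence of x, (y, j) the first of y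
      obtain ⟨hi, hj⟩ := h
      simp only at hi hj
      subst hj
      have hiu : i = u.count x - 1 := by
        have := mem_tok.mp hsu
        have := hcnt x
        omega
      subst hiu
      have hlu := tIdx_tok_last hxu
      have hfu := tIdx_tok_first u y
      have hord := tIdx_lt_of_ordPairs hndu hm
      rw [hlu, hfu] at hord
      have hnP : ¬ (firstIdx v y < lastIdx v x) := by
        rw [← hp3 y hyu x hxu]
        omega
      have hlv := tIdx_tok_last hxv
      have hfv := tIdx_tok_first v y
      have hee : u.count x - 1 = v.count x - 1 := by rw [hcnt x]
      rw [hee]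
      have hne : tIdx (tok v) (x, v.count x - 1) ≠ tIdx (tok v) (y, 0) := by
        intro heq
        have hmemx : (x, v.count x - 1) ∈ tok v := by
          rw [mem_tok]
          have := mem_tok.mp hsv
          omega
        have hmemy : (y, 0) ∈ tok v := by
          rw [mem_tok]
          have := mem_tok.mp htv
          omega
        have := tIdx_inj hmemx hmemy heq
        exact hxy (by simpa using congrArg Prod.fst this)
      rw [hlv, hfv] at hne ⊢
      omega
    · -- (x, i) is the first occurrence of x, (y, j) the last of y
      obtain ⟨hi, hj⟩ := h
      simp only at hi hj
      subst hi
      have hju : j = u.count y - 1 := by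
        have := mem_tok.mp htu
        have := hcnt y
        omega
      subst hju
      have hlu := tIdx_tok_last hyu
      have hfu := tIdx_tok_first u x
      have hord := tIdx_lt_of_ordPairs hndu hm
      rw [hlu, hfu] at hord
      have hP : firstIdx v x < lastIdx v y := by
        rw [← hp3 x hxu y hyu]
        exact hord
      have hlv := tIdx_tok_last hyv
      have hfv := tIdx_tok_first v x
      have hee : u.count y - 1 = v.count y - 1 := by rw [hcnt y]
      rw [hee, hfv, hlv]
      exact hP

end Initial


theorem stmt7 (e : Wd × Wd) (hbb : BlockBalanced e) (hp : P12 e) :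
    Consequence (delta {sigma1, sigma2}) e := by
  obtain ⟨u, v⟩ := e
  intro M _ hΓ
  have h1 : Sat M sigma1 := hΓ _ sigma_mem_delta.1
  have h2 : Sat M sigma2 := hΓ _ sigma_mem_delta.2
  refine rtg_sound h1 h2 ?_
  exact main_reach v _ u le_rfl (initial_cnt hbb) (initial_I2 hbb hp)
end

section
/- An identity u ≈ v belongs to J_2, i.e., the words u and v have the same set of scattered subwords of length at most 2, if and only if u ≈ v satisfies property P_{1,2}. -/
/-- `Jm m`: the set of identities whose two sides have the same set of
scattered subwords (sublists) of length at most `m`. -/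
def Jm (m : ℕ) : Set (Wd × Wd) :=
  {e | ∀ p : Wd, p.length ≤ m → (p.Sublist e.1 ↔ p.Sublist e.2)}


section Aux

lemma indexOf_le_of_getElem {l : List ℕ} {x : ℕ} :
    ∀ {i : ℕ} (h : i < l.length), l[i] = x → l.idxOf x ≤ i := by
  induction l with
  | nil => intro i h; simp at h
  | cons a t ih =>
    intro i h hx
    by_cases hax : x = a
    · subst hax; simp
    · cases i with
      | zero => simp at hx; exact absurd hx.symm hax
      | succ i =>
        rw [List.idxOf_cons_ne _ (Ne.symm hax)]
        simpa using ih (by simpa using h) (by simpa using hx)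

lemma lastIdx_spec {u : Wd} {y : ℕ} (hy : y ∈ u) :
    ∃ h : lastIdx u y < u.length, u[lastIdx u y] = y := by
  have hr : u.reverse.idxOf y < u.reverse.length :=
    List.idxOf_lt_length_iff.2 (by simpa using hy)
  have h1 : u.reverse[u.reverse.idxOf y]'hr = y := List.getElem_idxOf hr
  rw [List.getElem_reverse] at h1
  have hlen : u.reverse.length = u.length := List.length_reverse (as := u)
  rw [hlen] at hr
  have hl : lastIdx u y = u.length - 1 - u.reverse.idxOf y := rfl
  refine ⟨by omega, ?_⟩
  simp only [hl]
  exact h1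

lemma le_lastIdx {u : Wd} {y : ℕ} {j : ℕ} (hj : j < u.length) (h : u[j] = y) :
    j ≤ lastIdx u y := by
  have hlt : u.length - 1 - j < u.reverse.length := by
    rw [List.length_reverse]; omega
  have h2 : u.reverse[u.length - 1 - j]'hlt = y := by
    rw [List.getElem_reverse]
    have he : u.length - 1 - (u.length - 1 - j) = j := by omega
    simp_rw [he]
    exact h
  have h3 := indexOf_le_of_getElem hlt h2
  have hl : lastIdx u y = u.length - 1 - u.reverse.idxOf y := rfl
  omega

lemma pair_sublist {u : Wd} {x y : ℕ} (hx : x ∈ u) (hy : y ∈ u) :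
    [x, y].Sublist u ↔ firstIdx u x < lastIdx u y := by
  constructor
  · intro h
    rw [List.cons_sublist_iff] at h
    obtain ⟨r₁, r₂, rfl, hx1, hy2⟩ := h
    rw [List.singleton_sublist] at hy2
    have hf : firstIdx (r₁ ++ r₂) x < r₁.length := by
      have h1 := List.idxOf_append_of_mem (l₂ := r₂) hx1
      have h2 := List.idxOf_lt_length_iff.2 hx1
      simp only [firstIdx]; omega
    have hk : r₂.idxOf y < r₂.length := List.idxOf_lt_length_iff.2 hy2
    have hj : r₁.length + r₂.idxOf y < (r₁ ++ r₂).length := by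
      simp only [List.length_append]; omega
    have hgy : (r₁ ++ r₂)[r₁.length + r₂.idxOf y]'hj = y := by
      rw [List.getElem_append_right (by omega)]
      have he : r₁.length + r₂.idxOf y - r₁.length = r₂.idxOf y := by omega
      simp_rw [he]
      exact List.getElem_idxOf hk
    have := le_lastIdx hj hgy
    omega
  · intro h
    have hf : firstIdx u x < u.length := List.idxOf_lt_length_iff.2 hx
    obtain ⟨hL, hgL⟩ := lastIdx_spec hy
    have hd : u.drop (firstIdx u x) = x :: u.drop (firstIdx u x + 1) := by
      rw [List.drop_eq_getElem_cons hf]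
      congr 1
      exact List.getElem_idxOf hf
    have hyd : y ∈ u.drop (firstIdx u x + 1) := by
      have h1 : (u.drop (firstIdx u x + 1))[lastIdx u y - (firstIdx u x + 1)]'
          (by rw [List.length_drop]; omega) = y := by
        rw [List.getElem_drop]
        have he : firstIdx u x + 1 + (lastIdx u y - (firstIdx u x + 1)) = lastIdx u y := by omega
        simp_rw [he]
        exact hgL
      exact h1 ▸ List.getElem_mem _
    have s1 : List.Sublist [x, y] (x :: u.drop (firstIdx u x + 1)) :=
      List.cons_sublist_cons.2 (List.singleton_sublist.2 hyd)
    rw [← hd] at s1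
    exact s1.trans (List.drop_sublist _ _)

lemma pairxx_sublist (u : Wd) (x : ℕ) : [x, x].Sublist u ↔ 2 ≤ u.count x := by
  have e : ([x, x] : Wd) = List.replicate 2 x := rfl
  rw [e, ← List.replicate_sublist_iff]

end Aux

theorem stmt8 (u v : Wd) : (u, v) ∈ Jm 2 ↔ P12 (u, v) := by
  simp only [Jm, Set.mem_setOf_eq, P12, conW, linW, nonW]
  constructor
  · intro h
    have hcon : ∀ x, x ∈ u ↔ x ∈ v := fun x => by
      simpa using h [x] (by simp)
    have hnon : ∀ x, 2 ≤ u.count x ↔ 2 ≤ v.count x := fun x => by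
      have := h [x, x] (by simp)
      rwa [pairxx_sublist, pairxx_sublist] at this
    refine ⟨?_, ?_, ?_⟩
    · ext x
      simp only [Set.mem_setOf_eq]
      have h1 := hcon x
      have h2 := hnon x
      rw [← List.count_pos_iff, ← List.count_pos_iff] at h1
      omega
    · ext x
      exact hnon x
    · intro x hx y hy
      rw [← pair_sublist hx hy, ← pair_sublist ((hcon x).1 hx) ((hcon y).1 hy)]
      exact h [x, y] (by simp)
  · rintro ⟨hl, hn, hp⟩
    have hcon : ∀ x, x ∈ u ↔ x ∈ v := by
      intro x
      have h1 : u.count x = 1 ↔ v.count x = 1 := by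
        have := Set.ext_iff.1 hl x
        simpa using this
      have h2 : 2 ≤ u.count x ↔ 2 ≤ v.count x := by
        have := Set.ext_iff.1 hn x
        simpa using this
      rw [← List.count_pos_iff, ← List.count_pos_iff]
      omega
    intro p hlen
    match p, hlen with
    | [], _ => simp
    | [x], _ => simpa using hcon x
    | [x, y], _ =>
      constructor
      · intro hs
        have hx : x ∈ u := hs.subset (by simp)
        have hy : y ∈ u := hs.subset (by simp)
        rw [pair_sublist hx hy] at hs
        rw [pair_sublist ((hcon x).1 hx) ((hcon y).1 hy)]
        exact (hp x hx y hy).1 hs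
      · intro hs
        have hx : x ∈ v := hs.subset (by simp)
        have hy : y ∈ v := hs.subset (by simp)
        rw [pair_sublist hx hy] at hs
        have hxu := (hcon x).2 hx
        have hyu := (hcon y).2 hy
        rw [pair_sublist hxu hyu]
        exact (hp x hxu y hyu).2 hs
    | x :: y :: z :: t, hlen => simp at hlen
end

section
/- An identity belongs to J_2, i.e., its two sides have the same set of scattered subwords of length at most 2, if and only if it is a consequence of {σ1, σ2, x t1 x t2 x ≈ x t1 t2 x}^δ, where σ1 is x y t1 x t2 y ≈ y x t1 x t2 y and σ2 is x t1 y t2 x y ≈ x t1 y t2 y x. -/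
/-- x t1 x t2 x ≈ x t1 t2 x, with x=0, t1=2, t2=3. -/
def xtxtx : Wd × Wd := ([0,2,0,3,0], [0,2,3,0])

namespace Stmt9

/-! ### The profile monoid -/

@[ext] structure PM where
  C : Set ℕ
  P : Set (ℕ × ℕ)

instance : One PM := ⟨⟨∅, ∅⟩⟩
instance : Mul PM := ⟨fun a b => ⟨a.C ∪ b.C, a.P ∪ b.P ∪ a.C ×ˢ b.C⟩⟩

@[simp] lemma mul_C (a b : PM) : (a * b).C = a.C ∪ b.C := rfl
@[simp] lemma mul_P (a b : PM) : (a * b).P = a.P ∪ b.P ∪ a.C ×ˢ b.C := rfl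
@[simp] lemma one_C : (1 : PM).C = ∅ := rfl
@[simp] lemma one_P : (1 : PM).P = ∅ := rfl

instance : Monoid PM where
  mul_assoc a b c := by
    apply PM.ext
    · ext x; simp; tauto
    · ext x; simp [Set.mem_prod]; tauto
  one_mul a := by apply PM.ext <;> simp
  mul_one a := by apply PM.ext <;> simp

/-! ### Sublist facts -/

lemma pair_split {a b : ℕ} {l : Wd} :
    List.Sublist [a,b] l ↔ ∃ s t, l = s ++ a :: t ∧ b ∈ t := by
  constructor
  · intro h
    induction l with
    | nil => simp at h
    | cons c l ih =>
      cases h with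
      | cons _ h' =>
        obtain ⟨s, t, rfl, hb⟩ := ih h'
        exact ⟨c :: s, t, rfl, hb⟩
      | cons_cons _ h' =>
        exact ⟨[], l, rfl, List.singleton_sublist.1 h'⟩
  · rintro ⟨s, t, rfl, hb⟩
    have h1 : List.Sublist [a,b] (a :: t) :=
      List.cons_sublist_cons.2 (List.singleton_sublist.2 hb)
    exact h1.trans (List.sublist_append_right s (a :: t))

lemma pair_append {a b : ℕ} {u v : Wd} :
    List.Sublist [a,b] (u ++ v) ↔
      List.Sublist [a,b] u ∨ List.Sublist [a,b] v ∨ (a ∈ u ∧ b ∈ v) := by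
  rw [List.sublist_append_iff]
  constructor
  · rintro ⟨l1, l2, h, h1, h2⟩
    replace h := h.symm
    rcases l1 with _ | ⟨x, _ | ⟨y, l⟩⟩
    · simp only [List.nil_append] at h; subst h
      exact Or.inr (Or.inl h2)
    · simp only [List.singleton_append, List.cons.injEq] at h
      obtain ⟨rfl, rfl⟩ := h
      exact Or.inr (Or.inr ⟨List.singleton_sublist.1 h1, List.singleton_sublist.1 h2⟩)
    · simp only [List.cons_append, List.cons.injEq, List.append_eq_nil_iff] at h
      obtain ⟨rfl, rfl, rfl, rfl⟩ := h
      exact Or.inl h1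
  · rintro (h | h | ⟨ha, hb⟩)
    · exact ⟨[a,b], [], by simp, h, List.nil_sublist _⟩
    · exact ⟨[], [a,b], by simp, List.nil_sublist _, h⟩
    · exact ⟨[a], [b], by simp, List.singleton_sublist.2 ha, List.singleton_sublist.2 hb⟩

/-! ### The profile map -/

def pi (u : Wd) : PM := ⟨{a | List.Sublist [a] u}, {p | List.Sublist [p.1, p.2] u}⟩

@[simp] lemma pi_C (u : Wd) : (pi u).C = {a | List.Sublist [a] u} := rfl
@[simp] lemma pi_P (u : Wd) : (pi u).P = {p : ℕ × ℕ | List.Sublist [p.1, p.2] u} := rfl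

lemma pi_append (u v : Wd) : pi (u ++ v) = pi u * pi v := by
  apply PM.ext
  · ext a; simp [List.singleton_sublist]
  · ext p
    simp only [pi_P, mul_P, Set.mem_setOf_eq, Set.mem_union, Set.mem_prod, pi_C,
      pair_append, List.singleton_sublist]
    tauto

lemma pi_single (a : ℕ) : pi [a] = ⟨{a}, ∅⟩ := by
  apply PM.ext
  · ext b; simp [List.singleton_sublist]
  · ext p
    simp only [pi_P, Set.mem_setOf_eq, Set.mem_empty_iff_false, iff_false]
    intro h
    have := h.length_le
    simp at this

lemma pi_nil : pi [] = 1 := by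
  apply PM.ext
  · ext a; simp [List.singleton_sublist]
  · ext p; simp only [pi_P, Set.mem_setOf_eq, List.sublist_nil, one_P]; simp

@[simp] lemma eval_nil {M : Type*} [Monoid M] (φ : ℕ → M) : evalWord φ [] = 1 := rfl

lemma eval_append {M : Type*} [Monoid M] (φ : ℕ → M) (u v : Wd) :
    evalWord φ (u ++ v) = evalWord φ u * evalWord φ v := by
  simp [evalWord]

@[simp] lemma eval_cons {M : Type*} [Monoid M] (φ : ℕ → M) (a : ℕ) (u : Wd) :
    evalWord φ (a :: u) = φ a * evalWord φ u := by
  simp [evalWord]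

@[simp] lemma eval_single {M : Type*} [Monoid M] (φ : ℕ → M) (a : ℕ) :
    evalWord φ [a] = φ a := by simp [evalWord]

lemma pi_eval (u : Wd) : pi u = evalWord (fun a => pi [a]) u := by
  induction u with
  | nil => simpa using pi_nil
  | cons a l ih =>
    have : a :: l = [a] ++ l := rfl
    rw [this, pi_append, eval_append, ih, eval_single]

/-! ### J₂ characterization -/

lemma mem_Jm2 (e : Wd × Wd) : e ∈ Jm 2 ↔ pi e.1 = pi e.2 := by
  constructor
  · intro h
    apply PM.ext
    · ext a; exact h [a] (by simp)
    · ext p; exact h [p.1, p.2] (by simp)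
  · intro h p hp
    have hC := congrArg PM.C h
    have hP := congrArg PM.P h
    match p with
    | [] => simp
    | [a] =>
      have := Set.ext_iff.mp hC a
      simpa using this
    | [a, b] =>
      have := Set.ext_iff.mp hP (a, b)
      simpa using this
    | a :: b :: c :: l => simp at hp

/-! ### Counts -/

def C2 (u : Wd) : Prop := ∀ x, u.count x ≤ 2

lemma two_le_count_iff {a : ℕ} {u : Wd} : 2 ≤ u.count a ↔ List.Sublist [a,a] u := by
  rw [← List.replicate_sublist_iff]
  rfl

lemma count_eq_of_pi {u v : Wd} (h : pi u = pi v) (hu : C2 u) (hv : C2 v) (a : ℕ) :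
    u.count a = v.count a := by
  have h1 : a ∈ u ↔ a ∈ v := by
    have := Set.ext_iff.mp (congrArg PM.C h) a
    simpa [List.singleton_sublist] using this
  have h2 : 2 ≤ u.count a ↔ 2 ≤ v.count a := by
    rw [two_le_count_iff, two_le_count_iff]
    have := Set.ext_iff.mp (congrArg PM.P h) (a, a)
    simpa using this
  have hcu := hu a
  have hcv := hv a
  rw [← List.count_pos_iff, ← List.count_pos_iff] at h1
  by_cases h0 : 0 < u.count a
  · have h0' := h1.1 h0
    by_cases h2m : 2 ≤ u.count a
    · have := h2.1 h2m; omega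
    · have : ¬ 2 ≤ v.count a := fun hh => h2m (h2.2 hh)
      omega
  · have : ¬ 0 < v.count a := fun hh => h0 (h1.2 hh)
    omega

lemma pair_of_pi {u v : Wd} (h : pi u = pi v) (a b : ℕ) :
    List.Sublist [a,b] u ↔ List.Sublist [a,b] v := by
  have := Set.ext_iff.mp (congrArg PM.P h) (a, b)
  simpa using this

/-! ### Derivations -/

inductive Step : Wd → Wd → Prop
  | s1 (p a b s t q : Wd) : Step (p++(a++(b++(s++(a++(t++(b++q)))))))
                                 (p++(b++(a++(s++(a++(t++(b++q)))))))
  | s2 (p a s b t q : Wd) : Step (p++(a++(s++(b++(t++(a++(b++q)))))))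
                                 (p++(a++(s++(b++(t++(b++(a++q)))))))
  | del (p a s t q : Wd)  : Step (p++(a++(s++(a++(t++(a++q))))))
                                 (p++(a++(s++(t++(a++q)))))

inductive D : Wd → Wd → Prop
  | step {u v} : Step u v → D u v
  | refl (u) : D u u
  | symm {u v} : D u v → D v u
  | trans {u v w} : D u v → D v w → D u w

section Soundness

variable {M : Type*} [Monoid M]

lemma liftQ {X Y : M} (h : X = Y) (Q : M) : X * Q = Y * Q := by rw [h]

theorem step_sound (φ : ℕ → M)
    (h1 : ∀ A B S T : M, A*(B*(S*(A*(T*B)))) = B*(A*(S*(A*(T*B)))))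
    (h2 : ∀ A S B T : M, A*(S*(B*(T*(A*B)))) = A*(S*(B*(T*(B*A)))))
    (h3 : ∀ A S T : M, A*(S*(A*(T*A))) = A*(S*(T*A)))
    {u v : Wd} (h : Step u v) : evalWord φ u = evalWord φ v := by
  cases h with
  | s1 p a b s t q =>
    simp only [eval_append]
    congr 1
    have := liftQ (h1 (evalWord φ a) (evalWord φ b) (evalWord φ s) (evalWord φ t)) (evalWord φ q)
    simpa [mul_assoc] using this
  | s2 p a s b t q =>
    simp only [eval_append]
    congr 1
    have := liftQ (h2 (evalWord φ a) (evalWord φ s) (evalWord φ b) (evalWord φ t)) (evalWord φ q)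
    simpa [mul_assoc] using this
  | del p a s t q =>
    simp only [eval_append]
    congr 1
    have := liftQ (h3 (evalWord φ a) (evalWord φ s) (evalWord φ t)) (evalWord φ q)
    simpa [mul_assoc] using this

theorem D_sound (φ : ℕ → M)
    (h1 : ∀ A B S T : M, A*(B*(S*(A*(T*B)))) = B*(A*(S*(A*(T*B)))))
    (h2 : ∀ A S B T : M, A*(S*(B*(T*(A*B)))) = A*(S*(B*(T*(B*A)))))
    (h3 : ∀ A S T : M, A*(S*(A*(T*A))) = A*(S*(T*A)))
    {u v : Wd} (h : D u v) : evalWord φ u = evalWord φ v := by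
  induction h with
  | step h => exact step_sound φ h1 h2 h3 h
  | refl u => rfl
  | symm _ ih => exact ih.symm
  | trans _ _ ih1 ih2 => exact ih1.trans ih2

lemma primed1 (h : Sat M sigma1) :
    ∀ A B S T : M, A*(B*(S*(A*(T*B)))) = B*(A*(S*(A*(T*B)))) := by
  intro A B S T
  have := h (fun n => if n = 0 then A else if n = 1 then B else if n = 2 then S else T)
  simpa [sigma1, evalWord, mul_assoc] using this

lemma primed2 (h : Sat M sigma2) :
    ∀ A S B T : M, A*(S*(B*(T*(A*B)))) = A*(S*(B*(T*(B*A)))) := by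
  intro A S B T
  have := h (fun n => if n = 0 then A else if n = 1 then B else if n = 2 then S else T)
  simpa [sigma2, evalWord, mul_assoc] using this

lemma primed3 (h : Sat M xtxtx) :
    ∀ A S T : M, A*(S*(A*(T*A))) = A*(S*(T*A)) := by
  intro A S T
  have := h (fun n => if n = 0 then A else if n = 2 then S else T)
  simpa [xtxtx, evalWord, mul_assoc] using this

end Soundness

/-! ### PM satisfies the identities -/

set_option maxHeartbeats 1000000 in
lemma pm1 : ∀ A B S T : PM, A*(B*(S*(A*(T*B)))) = B*(A*(S*(A*(T*B)))) := by
  intro A B S T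
  apply PM.ext
  · ext x; simp; tauto
  · ext x
    simp only [mul_P, mul_C, Set.mem_union, Set.mem_prod]
    tauto

set_option maxHeartbeats 1000000 in
lemma pm2 : ∀ A S B T : PM, A*(S*(B*(T*(A*B)))) = A*(S*(B*(T*(B*A)))) := by
  intro A S B T
  apply PM.ext
  · ext x; simp; tauto
  · ext x
    simp only [mul_P, mul_C, Set.mem_union, Set.mem_prod]
    tauto

set_option maxHeartbeats 1000000 in
lemma pm3 : ∀ A S T : PM, A*(S*(A*(T*A))) = A*(S*(T*A)) := by
  intro A S T
  apply PM.ext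
  · ext x; simp; tauto
  · ext x
    simp only [mul_P, mul_C, Set.mem_union, Set.mem_prod]
    tauto

lemma step_pi {u v : Wd} (h : Step u v) : pi u = pi v := by
  have := step_sound (fun a => pi [a]) pm1 pm2 pm3 h
  rw [← pi_eval, ← pi_eval] at this
  exact this

lemma D_pi {u v : Wd} (h : D u v) : pi u = pi v := by
  induction h with
  | step h => exact step_pi h
  | refl u => rfl
  | symm _ ih => exact ih.symm
  | trans _ _ ih1 ih2 => exact ih1.trans ih2

lemma pi_sigma1 : pi sigma1.1 = pi sigma1.2 := by
  rw [pi_eval sigma1.1, pi_eval sigma1.2]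
  simpa [sigma1, evalWord, mul_assoc] using
    liftQ (pm1 (pi [0]) (pi [1]) (pi [2]) (pi [3])) 1

lemma pi_sigma2 : pi sigma2.1 = pi sigma2.2 := by
  rw [pi_eval sigma2.1, pi_eval sigma2.2]
  simpa [sigma2, evalWord, mul_assoc] using
    liftQ (pm2 (pi [0]) (pi [2]) (pi [1]) (pi [3])) 1

lemma pi_xtxtx : pi xtxtx.1 = pi xtxtx.2 := by
  rw [pi_eval xtxtx.1, pi_eval xtxtx.2]
  simpa [xtxtx, evalWord, mul_assoc] using
    liftQ (pm3 (pi [0]) (pi [2]) (pi [3])) 1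

/-! ### Evaluation in PM factors through pi -/

def F (φ : ℕ → PM) (m : PM) : PM :=
  ⟨{x | ∃ a ∈ m.C, x ∈ (φ a).C},
   {p | (∃ a ∈ m.C, p ∈ (φ a).P) ∨ (∃ q ∈ m.P, p.1 ∈ (φ q.1).C ∧ p.2 ∈ (φ q.2).C)}⟩

lemma F_mul_single (φ : ℕ → PM) (a : ℕ) (m : PM) :
    F φ (pi [a] * m) = φ a * F φ m := by
  rw [pi_single]
  apply PM.ext
  · ext x
    simp only [F, mul_C, Set.mem_union, Set.mem_setOf_eq, Set.mem_singleton_iff]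
    constructor
    · rintro ⟨b, hb | hb, hx⟩
      · subst hb; exact Or.inl hx
      · exact Or.inr ⟨b, hb, hx⟩
    · rintro (hx | ⟨b, hb, hx⟩)
      · exact ⟨a, Or.inl rfl, hx⟩
      · exact ⟨b, Or.inr hb, hx⟩
  · ext p
    simp only [F, mul_P, mul_C, Set.mem_union, Set.mem_setOf_eq, Set.mem_singleton_iff,
      Set.mem_prod, Set.mem_empty_iff_false, false_or]
    constructor
    · rintro (⟨b, hb | hb, hp⟩ | ⟨q, hq | ⟨hq1, hq2⟩, hp1, hp2⟩)
      · subst hb; exact Or.inl (Or.inl hp)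
      · exact Or.inl (Or.inr (Or.inl ⟨b, hb, hp⟩))
      · exact Or.inl (Or.inr (Or.inr ⟨q, hq, hp1, hp2⟩))
      · exact Or.inr ⟨by rw [hq1] at hp1; exact hp1, ⟨q.2, hq2, hp2⟩⟩
    · rintro ((hp | ⟨b, hb, hp⟩ | ⟨q, hq, hp1, hp2⟩) | ⟨hp1, b, hb, hp2⟩)
      · exact Or.inl ⟨a, Or.inl rfl, hp⟩
      · exact Or.inl ⟨b, Or.inr hb, hp⟩
      · exact Or.inr ⟨q, Or.inl hq, hp1, hp2⟩
      · exact Or.inr ⟨(a, b), Or.inr ⟨rfl, hb⟩, hp1, hp2⟩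

lemma eval_factor (φ : ℕ → PM) (u : Wd) : evalWord φ u = F φ (pi u) := by
  induction u with
  | nil =>
    rw [pi_nil]
    apply PM.ext
    · ext x; simp [F]
    · ext p; simp [F]
  | cons a l ih =>
    have h : a :: l = [a] ++ l := rfl
    rw [h, pi_append, eval_append, eval_single, F_mul_single, ih]

lemma sat_of_pi {u v : Wd} (h : pi u = pi v) : Sat PM (u, v) := by
  intro φ
  show evalWord φ u = evalWord φ v
  rw [eval_factor, eval_factor, h]

/-! ### Restriction preserves profiles -/

lemma pi_restrict (u : Wd) (X : Set ℕ) :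
    pi (restrict u X) =
      ⟨(pi u).C ∩ X, (pi u).P ∩ (X ×ˢ X)⟩ := by
  have hpred : ∀ (a : ℕ), (fun a => @decide (a ∈ X) (Classical.propDecidable _)) a = true ↔ a ∈ X := by
    intro a
    rw [@decide_eq_true_eq _ (Classical.propDecidable _)]
  apply PM.ext
  · ext a
    simp only [pi_C, Set.mem_inter_iff, Set.mem_setOf_eq, List.singleton_sublist, restrict,
      List.mem_filter, hpred]
  · ext p
    simp only [pi_P, Set.mem_inter_iff, Set.mem_setOf_eq, Set.mem_prod, restrict]
    constructor
    · intro hsub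
      refine ⟨hsub.trans List.filter_sublist, ?_, ?_⟩
      · have h1 : p.1 ∈ List.filter (fun a => @decide (a ∈ X) (Classical.propDecidable _)) u :=
          hsub.subset (by simp)
        rw [List.mem_filter] at h1
        exact (hpred p.1).1 h1.2
      · have h2 : p.2 ∈ List.filter (fun a => @decide (a ∈ X) (Classical.propDecidable _)) u :=
          hsub.subset (by simp)
        rw [List.mem_filter] at h2
        exact (hpred p.2).1 h2.2
    · rintro ⟨hsub, h1, h2⟩
      have : [p.1, p.2] = List.filter (fun a => @decide (a ∈ X) (Classical.propDecidable _)) [p.1, p.2] := by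
        rw [eq_comm, List.filter_eq_self]
        intro a ha
        simp only [List.mem_cons, List.mem_singleton, List.not_mem_nil, or_false] at ha
        rcases ha with rfl | rfl
        · exact (hpred p.1).2 h1
        · exact (hpred p.2).2 h2
      rw [this]
      exact List.Sublist.filter _ hsub

lemma restrict_pi_eq {u v : Wd} (h : pi u = pi v) (X : Set ℕ) :
    pi (restrict u X) = pi (restrict v X) := by
  rw [pi_restrict, pi_restrict, h]

lemma restrict_univ (u : Wd) : restrict u Set.univ = u := by
  rw [restrict, List.filter_eq_self]
  intro a _
  rw [@decide_eq_true_eq _ (Classical.propDecidable _)]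
  trivial

/-! ### Combinatorics: splitting lemmas -/

lemma mem_split_first {a : ℕ} {l : Wd} (h : a ∈ l) : ∃ s t, l = s ++ a :: t ∧ a ∉ s := by
  induction l with
  | nil => simp at h
  | cons c l ih =>
    by_cases hca : c = a
    · exact ⟨[], l, by rw [hca]; rfl, by simp⟩
    · have h' : a ∈ l := by
        rcases List.mem_cons.1 h with h | h
        · exact absurd h.symm hca
        · exact h
      obtain ⟨s, t, rfl, hs⟩ := ih h'
      refine ⟨c :: s, t, rfl, ?_⟩
      intro hmem
      rcases List.mem_cons.1 hmem with h | h
      · exact hca h.symm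
      · exact hs h

/-! ### The swap derivation -/

lemma swap_deriv {P Q : Wd} {z y : ℕ} (hzy : z ≠ y)
    (h : (y ∈ Q ∧ z ∈ Q) ∨ (y ∈ P ∧ z ∈ P)) :
    D (P ++ z :: y :: Q) (P ++ y :: z :: Q) := by
  rcases h with ⟨hy, hz⟩ | ⟨hy, hz⟩
  · -- both occur later: σ1
    obtain ⟨s, t0, rfl, hzs⟩ := mem_split_first hz
    by_cases hyt : y ∈ t0
    · obtain ⟨t, r, rfl⟩ := List.append_of_mem hyt
      have h := D.step (Step.s1 P [z] [y] s t r)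
      simpa only [List.append_assoc, List.cons_append, List.singleton_append,
        List.nil_append] using h
    · have hys : y ∈ s := by
        rcases List.mem_append.1 hy with h | h
        · exact h
        · rcases List.mem_cons.1 h with h | h
          · exact absurd h.symm hzy
          · exact absurd h hyt
      obtain ⟨s1, s2, rfl⟩ := List.append_of_mem hys
      have h := D.symm (D.step (Step.s1 P [y] [z] s1 s2 t0))
      simpa only [List.append_assoc, List.cons_append, List.singleton_append,
        List.nil_append] using h
  · -- both occur earlier: σ2
    obtain ⟨s, t0, rfl, hzs⟩ := mem_split_first hz
    by_cases hyt : y ∈ t0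
    · obtain ⟨t1, t2, rfl⟩ := List.append_of_mem hyt
      have h := D.step (Step.s2 s [z] t1 [y] t2 Q)
      simpa only [List.append_assoc, List.cons_append, List.singleton_append,
        List.nil_append] using h
    · have hys : y ∈ s := by
        rcases List.mem_append.1 hy with h | h
        · exact h
        · rcases List.mem_cons.1 h with h | h
          · exact absurd h.symm hzy
          · exact absurd h hyt
      obtain ⟨s1, s2, rfl⟩ := List.append_of_mem hys
      have h := D.symm (D.step (Step.s2 s1 [y] s2 [z] t0 Q))
      simpa only [List.append_assoc, List.cons_append, List.singleton_append,
        List.nil_append] using h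

/-! ### The key combinatorial case analysis -/

lemma key {w p0 q v2 : Wd} {z y : ℕ} (hzy : z ≠ y) (hyp0 : y ∉ p0)
    (hpi : pi (w ++ (p0 ++ z :: y :: q)) = pi (w ++ y :: v2))
    (hu : C2 (w ++ (p0 ++ z :: y :: q))) (hv : C2 (w ++ y :: v2)) :
    (y ∈ q ∧ z ∈ q) ∨ (y ∈ w ∧ z ∈ w ++ p0) := by
  have hc : ∀ a, (w ++ (p0 ++ z :: y :: q)).count a = (w ++ y :: v2).count a :=
    count_eq_of_pi hpi hu hv
  have hP : ∀ a b, List.Sublist [a,b] (w ++ (p0 ++ z :: y :: q)) ↔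
      List.Sublist [a,b] (w ++ y :: v2) := pair_of_pi hpi
  have hzyu : List.Sublist [z,y] (w ++ (p0 ++ z :: y :: q)) :=
    pair_split.2 ⟨w ++ p0, y :: q, by simp, by simp⟩
  by_cases hzq : z ∈ q
  · left
    refine ⟨?_, hzq⟩
    by_contra hyq
    have hyv2 : y ∉ v2 := by
      have h := hc y
      have h1 : p0.count y = 0 := List.count_eq_zero.2 hyp0
      have h2 : q.count y = 0 := List.count_eq_zero.2 hyq
      simp only [List.count_append, List.count_cons, beq_iff_eq, hzy, if_false,
        if_true, h1, h2] at h
      refine List.count_eq_zero.1 ?_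
      omega
    have hzyv := (hP z y).1 hzyu
    obtain ⟨s, t, hveq, hyt⟩ := pair_split.1 hzyv
    have hveq2 : w ++ (y :: v2) = s ++ (z :: t) := hveq
    rcases List.append_eq_append_iff.1 hveq2 with ⟨a', ha1, ha2⟩ | ⟨c', hc1, hc2⟩
    · rcases a' with _ | ⟨h0, a''⟩
      · simp only [List.nil_append, List.cons.injEq] at ha2
        exact hzy ha2.1.symm
      · simp only [List.cons_append, List.cons.injEq] at ha2
        obtain ⟨rfl, rfl⟩ := ha2
        exact hyv2 (by
          refine List.mem_append.2 (Or.inr ?_)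
          exact List.mem_cons.2 (Or.inr hyt))
    · rcases c' with _ | ⟨h0, c''⟩
      · simp only [List.nil_append, List.cons.injEq] at hc2
        exact hzy hc2.1
      · simp only [List.cons_append, List.cons.injEq] at hc2
        obtain ⟨rfl, rfl⟩ := hc2
        -- z ∈ w; contradiction with count z ≤ 2
        have hzw : z ∈ w := by rw [hc1]; exact List.mem_append.2 (Or.inr (List.mem_cons_self))
        have h := hu z
        have h3 : 1 ≤ w.count z := List.count_pos_iff.2 hzw
        have h4 : 1 ≤ q.count z := List.count_pos_iff.2 hzq
        have hyz : ¬ (y = z) := fun hh => hzy hh.symm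
        simp only [List.count_append, List.count_cons, beq_iff_eq, hyz,
          eq_self_iff_true, if_true, if_false] at h
        omega
  · right
    have hyw : y ∈ w := by
      by_contra hyw
      have hzv2 : z ∈ v2 := by
        have h := hc z
        have h1 : q.count z = 0 := List.count_eq_zero.2 hzq
        simp only [List.count_append, List.count_cons, beq_iff_eq, h1] at h
        refine List.count_pos_iff.1 ?_
        have hyz : ¬ (y = z) := fun hh => hzy hh.symm
        simp only [hyz, if_false, if_true] at h
        omega
      have hyzv : List.Sublist [y,z] (w ++ y :: v2) :=
        pair_split.2 ⟨w, v2, rfl, hzv2⟩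
      have hyzu := (hP y z).2 hyzv
      obtain ⟨s, t, hueq, hzt⟩ := pair_split.1 hyzu
      have hueq2 : (w ++ p0 ++ [z]) ++ (y :: q) = s ++ (y :: t) := by
        rw [← hueq]; simp
      rcases List.append_eq_append_iff.1 hueq2 with ⟨a', ha1, ha2⟩ | ⟨c', hc1, hc2⟩
      · rcases a' with _ | ⟨h0, a''⟩
        · simp only [List.nil_append, List.cons.injEq] at ha2
          exact hzq (ha2.2 ▸ hzt)
        · simp only [List.cons_append, List.cons.injEq] at ha2
          obtain ⟨rfl, rfl⟩ := ha2
          exact hzq (List.mem_append.2 (Or.inr (List.mem_cons.2 (Or.inr hzt))))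
      · rcases c' with _ | ⟨h0, c''⟩
        · simp only [List.append_nil] at hc1
          simp only [List.nil_append, List.cons.injEq] at hc2
          exact hzq (hc2.2 ▸ hzt)
        · simp only [List.cons_append, List.cons.injEq] at hc2
          obtain ⟨rfl, rfl⟩ := hc2
          have : y ∈ w ++ p0 ++ [z] := by
            rw [hc1]; exact List.mem_append.2 (Or.inr (List.mem_cons_self))
          rcases List.mem_append.1 this with h | h
          · rcases List.mem_append.1 h with h | h
            · exact hyw h
            · exact hyp0 h
          · exact hzy (List.mem_singleton.1 h).symm
    refine ⟨hyw, ?_⟩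
    by_contra hzP
    have hzw : z ∉ w := fun h => hzP (List.mem_append.2 (Or.inl h))
    have hzyv := (hP z y).1 hzyu
    obtain ⟨s, t, hveq, hyt⟩ := pair_split.1 hzyv
    have hveq2 : w ++ (y :: v2) = s ++ (z :: t) := hveq
    rcases List.append_eq_append_iff.1 hveq2 with ⟨a', ha1, ha2⟩ | ⟨c', hc1, hc2⟩
    · rcases a' with _ | ⟨h0, a''⟩
      · simp only [List.nil_append, List.cons.injEq] at ha2
        exact hzy ha2.1.symm
      · simp only [List.cons_append, List.cons.injEq] at ha2
        obtain ⟨rfl, rfl⟩ := ha2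
        -- v2 = a'' ++ z :: t, y ∈ t → y ∈ v2, and y ∈ w: count y v ≥ 3
        have h := hv y
        have h3 : 1 ≤ w.count y := List.count_pos_iff.2 hyw
        have h4 : 1 ≤ t.count y := List.count_pos_iff.2 hyt
        simp only [List.count_append, List.count_cons, beq_iff_eq, hzy,
          eq_self_iff_true, if_true, if_false] at h
        omega
    · rcases c' with _ | ⟨h0, c''⟩
      · simp only [List.nil_append, List.cons.injEq] at hc2
        exact hzy hc2.1
      · simp only [List.cons_append, List.cons.injEq] at hc2
        obtain ⟨rfl, rfl⟩ := hc2
        exact hzw (by rw [hc1]; exact List.mem_append.2 (Or.inr (List.mem_cons_self)))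

/-! ### Reduction to multiplicity ≤ 2 -/

lemma three_split {x : ℕ} {u : Wd} (h : 3 ≤ u.count x) :
    ∃ p s t q, u = p ++ (x :: (s ++ (x :: (t ++ (x :: q))))) := by
  have h1 : x ∈ u := List.count_pos_iff.1 (by omega)
  obtain ⟨p, r, rfl, hp⟩ := mem_split_first h1
  have hr2 : 2 ≤ r.count x := by
    have hp0 : p.count x = 0 := List.count_eq_zero.2 hp
    simp only [List.count_append, List.count_cons, beq_iff_eq, eq_self_iff_true,
      if_true, hp0] at h
    omega
  have h2 : x ∈ r := List.count_pos_iff.1 (by omega)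
  obtain ⟨s, r2, rfl, hs⟩ := mem_split_first h2
  have hr3 : 1 ≤ r2.count x := by
    have hs0 : s.count x = 0 := List.count_eq_zero.2 hs
    simp only [List.count_append, List.count_cons, beq_iff_eq, eq_self_iff_true,
      if_true, hs0] at hr2
    omega
  have h3 : x ∈ r2 := List.count_pos_iff.1 (by omega)
  obtain ⟨t, q, rfl⟩ := List.append_of_mem h3
  exact ⟨p, s, t, q, rfl⟩

lemma reduce_aux : ∀ n (u : Wd), u.length ≤ n → ∃ u', D u u' ∧ C2 u' := by
  intro n
  induction n with
  | zero =>
    intro u hu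
    have : u = [] := List.length_eq_zero_iff.1 (by omega)
    subst this
    exact ⟨[], D.refl [], fun x => by simp⟩
  | succ n ih =>
    intro u hu
    by_cases hC : C2 u
    · exact ⟨u, D.refl u, hC⟩
    · have : ∃ x, 3 ≤ u.count x := by
        by_contra hx
        push_neg at hx
        exact hC (fun x => by have := hx x; omega)
      obtain ⟨x, hx⟩ := this
      obtain ⟨p, s, t, q, rfl⟩ := three_split hx
      have hstep : D (p ++ (x :: (s ++ (x :: (t ++ (x :: q))))))
          (p ++ (x :: (s ++ (t ++ (x :: q))))) := by
        have h := D.step (Step.del p [x] s t q)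
        simpa only [List.append_assoc, List.cons_append, List.singleton_append,
          List.nil_append] using h
      have hlen : (p ++ (x :: (s ++ (t ++ (x :: q))))).length ≤ n := by
        simp only [List.length_append, List.length_cons] at hu ⊢
        omega
      obtain ⟨u', hD, hC'⟩ := ih _ hlen
      exact ⟨u', D.trans hstep hD, hC'⟩

lemma reduce (u : Wd) : ∃ u', D u u' ∧ C2 u' :=
  reduce_aux u.length u le_rfl

/-! ### indexOf facts -/

lemma idx_first {y : ℕ} {t : Wd} : ∀ (s : Wd), y ∉ s → List.idxOf y (s ++ y :: t) = s.length := by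
  intro s
  induction s with
  | nil => intro _; simp [List.idxOf_cons_self]
  | cons c s ih =>
    intro h
    have hcy : c ≠ y := fun hh => h (by rw [hh]; exact List.mem_cons_self)
    have hy : y ∉ s := fun hh => h (List.mem_cons.2 (Or.inr hh))
    simp only [List.cons_append, List.idxOf_cons_ne _ hcy, ih hy, List.length_cons]

/-! ### The main completeness induction -/

lemma count_simp_bundle : True := trivial

lemma main_aux : ∀ (n : ℕ) (w v' : Wd), C2 (w ++ v') → ∀ (k : ℕ) (u' : Wd),
    u'.length ≤ n → List.idxOf v'.headI u' ≤ k → C2 (w ++ u') →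
    pi (w ++ u') = pi (w ++ v') → D (w ++ u') (w ++ v') := by
  intro n
  induction n with
  | zero =>
    intro w v' hcv k u' hlen hk hcu hpi
    have hu0 : u' = [] := List.length_eq_zero_iff.1 (by omega)
    subst hu0
    rcases v' with _ | ⟨b, v2⟩
    · exact D.refl _
    · exfalso
      have h := count_eq_of_pi hpi hcu hcv b
      simp only [List.count_append, List.count_cons, beq_iff_eq, eq_self_iff_true, if_true,
        List.count_nil] at h
      omega
  | succ n ihn =>
    intro w v' hcv k
    induction k with
    | zero =>
      intro u' hlen hk hcu hpi
      have hc := count_eq_of_pi hpi hcu hcv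
      rcases u' with _ | ⟨a, u2⟩
      · rcases v' with _ | ⟨b, v2⟩
        · exact D.refl _
        · exfalso
          have h := hc b
          simp only [List.count_append, List.count_cons, beq_iff_eq, eq_self_iff_true, if_true,
            List.count_nil] at h
          omega
      · rcases v' with _ | ⟨b, v2⟩
        · exfalso
          have h := hc a
          simp only [List.count_append, List.count_cons, beq_iff_eq, eq_self_iff_true, if_true,
            List.count_nil] at h
          omega
        · by_cases hab : a = b
          · subst hab
            have e1 : w ++ (a :: u2) = (w ++ [a]) ++ u2 := by simp
            have e2 : w ++ (a :: v2) = (w ++ [a]) ++ v2 := by simp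
            rw [e1] at hpi hcu
            rw [e2] at hpi hcv
            rw [e1, e2]
            refine ihn (w ++ [a]) v2 hcv u2.length u2 ?_ (List.idxOf_le_length) hcu hpi
            simp only [List.length_cons] at hlen
            omega
          · exfalso
            -- heads differ: index must be positive, contradicting hk ≤ 0
            have hyu : b ∈ a :: u2 := by
              have h := hc b
              simp only [List.count_append, List.count_cons, beq_iff_eq, eq_self_iff_true,
                if_true, hab, if_false] at h
              refine List.count_pos_iff.1 ?_
              simp only [List.count_cons, beq_iff_eq, hab, if_false]
              omega
            obtain ⟨p, q, hsplit, hyp⟩ := mem_split_first hyu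
            have hpne : p ≠ [] := by
              intro h0
              rw [h0, List.nil_append] at hsplit
              injection hsplit with h1 _
              exact hab h1
            obtain ⟨p0, z, rfl⟩ : ∃ p0 z, p = p0 ++ [z] := by
              rcases List.eq_nil_or_concat p with h | ⟨p0, z, h⟩
              · exact absurd h hpne
              · exact ⟨p0, z, by rw [h, List.concat_eq_append]⟩
            have hbp : b ∉ p0 ++ [z] := hyp
            rw [hsplit] at hk
            have : List.idxOf (b :: v2).headI ((p0 ++ [z]) ++ b :: q) = (p0 ++ [z]).length := by
              exact idx_first _ hbp
            rw [this] at hk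
            simp at hk
      | succ k ihk =>
        intro u' hlen hk hcu hpi
        have hc := count_eq_of_pi hpi hcu hcv
        rcases u' with _ | ⟨a, u2⟩
        · rcases v' with _ | ⟨b, v2⟩
          · exact D.refl _
          · exfalso
            have h := hc b
            simp only [List.count_append, List.count_cons, beq_iff_eq, eq_self_iff_true, if_true,
              List.count_nil] at h
            omega
        · rcases v' with _ | ⟨b, v2⟩
          · exfalso
            have h := hc a
            simp only [List.count_append, List.count_cons, beq_iff_eq, eq_self_iff_true, if_true,
              List.count_nil] at h
            omega
          · by_cases hab : a = b
            · subst hab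
              have e1 : w ++ (a :: u2) = (w ++ [a]) ++ u2 := by simp
              have e2 : w ++ (a :: v2) = (w ++ [a]) ++ v2 := by simp
              rw [e1] at hpi hcu
              rw [e2] at hpi hcv
              rw [e1, e2]
              refine ihn (w ++ [a]) v2 hcv u2.length u2 ?_ (List.idxOf_le_length) hcu hpi
              simp only [List.length_cons] at hlen
              omega
            · -- heads differ: swap step
              have hyu : b ∈ a :: u2 := by
                have h := hc b
                simp only [List.count_append, List.count_cons, beq_iff_eq, eq_self_iff_true,
                  if_true, hab, if_false] at h
                refine List.count_pos_iff.1 ?_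
                simp only [List.count_cons, beq_iff_eq, hab, if_false]
                omega
              obtain ⟨p, q, hsplit, hyp⟩ := mem_split_first hyu
              have hpne : p ≠ [] := by
                intro h0
                rw [h0, List.nil_append] at hsplit
                injection hsplit with h1 _
                exact hab h1
              obtain ⟨p0, z, rfl⟩ : ∃ p0 z, p = p0 ++ [z] := by
                rcases List.eq_nil_or_concat p with h | ⟨p0, z, h⟩
                · exact absurd h hpne
                · exact ⟨p0, z, by rw [h, List.concat_eq_append]⟩
              have hbp : b ∉ p0 ++ [z] := hyp
              have hyp0 : b ∉ p0 := fun h => hyp (List.mem_append.2 (Or.inl h))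
              have hzy : z ≠ b := by
                intro h
                exact hyp (List.mem_append.2 (Or.inr (by rw [h]; exact List.mem_singleton.2 rfl)))
              -- normalize the word
              have eu : w ++ (a :: u2) = w ++ (p0 ++ z :: b :: q) := by
                rw [hsplit]; simp
              rw [hsplit] at hk hlen
              rw [eu] at hpi hcu ⊢
              have hkey := key hzy hyp0 hpi hcu hcv
              have hswap : D ((w ++ p0) ++ z :: b :: q) ((w ++ p0) ++ b :: z :: q) := by
                apply swap_deriv hzy
                rcases hkey with ⟨h1, h2⟩ | ⟨h1, h2⟩
                · exact Or.inl ⟨h1, h2⟩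
                · exact Or.inr ⟨List.mem_append.2 (Or.inl h1), h2⟩
              have e3 : (w ++ p0) ++ z :: b :: q = w ++ (p0 ++ z :: b :: q) := by simp
              have e4 : (w ++ p0) ++ b :: z :: q = w ++ (p0 ++ b :: z :: q) := by simp
              rw [e3, e4] at hswap
              refine D.trans hswap ?_
              -- apply inner induction hypothesis
              have hperm : (w ++ (p0 ++ b :: z :: q)).Perm (w ++ (p0 ++ z :: b :: q)) :=
                (List.Perm.append_left w ((List.Perm.append_left p0 (List.Perm.swap z b q))))
              refine ihk (p0 ++ b :: z :: q) ?_ ?_ ?_ ?_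
              · have := hlen
                simp only [List.length_append, List.length_cons] at this ⊢
                omega
              · have hidx : List.idxOf (b :: v2).headI (p0 ++ b :: z :: q) = p0.length :=
                  idx_first _ hyp0
                have hidx2 : List.idxOf (b :: v2).headI (p0 ++ [z] ++ b :: q) = p0.length + 1 := by
                  show List.idxOf b (p0 ++ [z] ++ b :: q) = p0.length + 1
                  rw [idx_first _ hbp]
                  simp
                rw [hidx2] at hk
                rw [hidx]
                omega
              · intro x
                rw [hperm.count_eq]
                exact hcu x
              · rw [← hpi]
                exact (D_pi hswap).symm

/-! ### Assembly -/

lemma main {u v : Wd} (hcu : C2 u) (hcv : C2 v) (h : pi u = pi v) : D u v := by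
  have := main_aux u.length [] v (by simpa using hcv) u.length u le_rfl
    List.idxOf_le_length (by simpa using hcu) (by simpa using h)
  simpa using this

theorem derivable_of_J2 {e : Wd × Wd} (h : e ∈ Jm 2) : D e.1 e.2 := by
  obtain ⟨u', hDu, hCu⟩ := reduce e.1
  obtain ⟨v', hDv, hCv⟩ := reduce e.2
  have hpi : pi u' = pi v' := by
    rw [← D_pi hDu, ← D_pi hDv]
    exact (mem_Jm2 e).1 h
  exact D.trans hDu (D.trans (main hCu hCv hpi) (D.symm hDv))

lemma self_mem_delta {f : Wd × Wd} {Γ : Set (Wd × Wd)} (h : f ∈ Γ) : f ∈ delta Γ :=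
  ⟨f, h, Set.univ, by rw [restrict_univ, restrict_univ]⟩

theorem stmt9' (e : Wd × Wd) :
    e ∈ Jm 2 ↔ Consequence (delta {sigma1, sigma2, xtxtx}) e := by
  constructor
  · intro h
    have hD := derivable_of_J2 h
    intro M instM hsat
    have h1 := primed1 (hsat sigma1 (self_mem_delta (by simp)))
    have h2 := primed2 (hsat sigma2 (self_mem_delta (by simp)))
    have h3 := primed3 (hsat xtxtx (self_mem_delta (by simp)))
    intro φ
    exact D_sound φ h1 h2 h3 hD
  · intro hcons
    rw [mem_Jm2]
    have hsatPM : ∀ f ∈ delta {sigma1, sigma2, xtxtx}, Sat PM f := by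
      rintro f ⟨g, hg, X, rfl⟩
      have hgpi : pi g.1 = pi g.2 := by
        simp only [Set.mem_insert_iff, Set.mem_singleton_iff] at hg
        rcases hg with rfl | rfl | rfl
        · exact pi_sigma1
        · exact pi_sigma2
        · exact pi_xtxtx
      exact sat_of_pi (restrict_pi_eq hgpi X)
    have h := hcons PM hsatPM (fun a => pi [a])
    rw [← pi_eval, ← pi_eval] at h
    exact h

end Stmt9


theorem stmt9 (e : Wd × Wd) :
    e ∈ Jm 2 ↔ Consequence (delta {sigma1, sigma2, xtxtx}) e := by
  exact Stmt9.stmt9' e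
end
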